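/- arXiv:1906.00473 — 3 statements merged into one kernel-verified Lean document; each statement's English description precedes it below -/
import Mathlib

section
/- Given distinct angles θ₁, …, θ_ℓ ∈ (0, π], there exists K ∈ ℕ (depending only on the θ_j) such that: for any real numbers r₁, …, r_ℓ and phases γ₁, …, γ_ℓ with the constraint that γ_j ∈ {0, π} whenever θ_j = π, there exists an integer i with 0 ≤ i ≤ K such that ∑_{j=1}^{ℓ} r_j cos(i θ_j + γ_j) ≤ −(1/4) max_j |r_j|. -/
open scoped BigOperators

noncomputable def Bb (α : ℝ) : ℝ := 2 / ‖Complex.exp (α * Complex.I) - 1‖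

lemma Bb_nonneg (α : ℝ) : 0 ≤ Bb α := by unfold Bb; positivity

lemma cos_sum_bound {α : ℝ} (h : Complex.exp ((α : ℂ) * Complex.I) ≠ 1) (β : ℝ) (N : ℕ) :
    |∑ i ∈ Finset.range N, Real.cos (i * α + β)| ≤ Bb α := by
  set x : ℂ := Complex.exp ((α : ℂ) * Complex.I) with hx
  have habs : ‖x‖ = 1 := Complex.norm_exp_ofReal_mul_I α
  have h1 : ∀ i : ℕ, Real.cos (i * α + β) = (x ^ i * Complex.exp ((β:ℂ) * Complex.I)).re := by
    intro i
    rw [← Complex.exp_ofReal_mul_I_re ((i:ℝ)*α+β)]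
    congr 1
    rw [hx, ← Complex.exp_nat_mul, ← Complex.exp_add]
    congr 1
    push_cast
    ring
  have h2 : ∑ i ∈ Finset.range N, Real.cos (i * α + β)
      = ((∑ i ∈ Finset.range N, x ^ i) * Complex.exp ((β:ℂ) * Complex.I)).re := by
    rw [Finset.sum_mul, Complex.re_sum]
    exact Finset.sum_congr rfl fun i _ => h1 i
  rw [h2]
  refine (Complex.abs_re_le_norm _).trans ?_
  rw [norm_mul, Complex.norm_exp_ofReal_mul_I, mul_one, geom_sum_eq h, norm_div]
  have hd : 0 < ‖x - 1‖ := by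
    rw [norm_pos_iff]
    exact sub_ne_zero.mpr h
  rw [Bb, ← hx]
  refine (div_le_div_iff_of_pos_right ?_).mpr ?_
  · exact hd
  calc ‖x ^ N - 1‖ ≤ ‖x ^ N‖ + ‖(1 : ℂ)‖ := by
        simpa using norm_sub_le (x ^ N) (1 : ℂ)
    _ = 2 := by rw [norm_pow, habs, one_pow, norm_one]; norm_num

lemma exp_ne_one_of {α : ℝ} (h0 : α ≠ 0) (h2 : |α| < 2 * Real.pi) :
    Complex.exp ((α : ℂ) * Complex.I) ≠ 1 := by
  intro hc
  rw [Complex.exp_eq_one_iff] at hc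
  obtain ⟨n, hn⟩ := hc
  have hI : (α : ℂ) = (n : ℂ) * (2 * Real.pi) := by
    have h' : (α : ℂ) * Complex.I = ((n : ℂ) * (2 * Real.pi)) * Complex.I := by
      rw [hn]; ring
    exact mul_right_cancel₀ Complex.I_ne_zero h'
  have hR : α = (n : ℝ) * (2 * Real.pi) := by exact_mod_cast hI
  rcases eq_or_ne n 0 with h | h
  · subst h; simp at hR; exact h0 hR
  · have h1 : (1:ℝ) ≤ |(n:ℝ)| := by
      have := Int.one_le_abs h
      exact_mod_cast this
    have hπ := Real.pi_pos
    rw [hR, abs_mul, abs_of_pos (by positivity : (0:ℝ) < 2 * Real.pi)] at h2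
    nlinarith

lemma mul_le_of_abs {a b c d : ℝ} (ha : |a| ≤ c) (hb : |b| ≤ d) : a * b ≤ c * d :=
  (le_abs_self _).trans <| (abs_mul a b) ▸
    mul_le_mul ha hb (abs_nonneg b) ((abs_nonneg a).trans ha)

lemma pointwise (x y r s : ℝ) :
    r * Real.cos x * (1 - s * Real.cos y)
      = r * Real.cos x - s * r / 2 * (Real.cos (x - y) + Real.cos (x + y)) := by
  rw [Real.cos_sub, Real.cos_add]; ring

set_option maxHeartbeats 2000000 in
/-- Given distinct angles `θ₁,…,θ_ℓ ∈ (0,π]`, there exists `K` such that for any amplitudes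
`r_j` and phases `γ_j` (with `γ_j ∈ {0,π}` whenever `θ_j = π`), some `0 ≤ i ≤ K` satisfies
`∑_j r_j cos(i θ_j + γ_j) ≤ -(1/4) max_j |r_j|`. -/
theorem stmt3 (ℓ : ℕ) (hℓ : 0 < ℓ) (θ : Fin ℓ → ℝ) (hinj : Function.Injective θ)
    (hθ : ∀ j, θ j ∈ Set.Ioc 0 Real.pi) :
    ∃ K : ℕ, ∀ r γ : Fin ℓ → ℝ,
      (∀ j, θ j = Real.pi → γ j = 0 ∨ γ j = Real.pi) →
      ∃ i : ℕ, i ≤ K ∧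
        ∑ j, r j * Real.cos (i * θ j + γ j) ≤ -(1 / 4) * (⨆ j, |r j|) := by
  haveI : Nonempty (Fin ℓ) := ⟨⟨0, hℓ⟩⟩
  have hπ := Real.pi_pos
  have hθne1 : ∀ j : Fin ℓ, Complex.exp ((θ j : ℂ) * Complex.I) ≠ 1 := fun j =>
    exp_ne_one_of (ne_of_gt (hθ j).1)
      (by rw [abs_of_pos (hθ j).1]; linarith [(hθ j).2])
  set C : ℝ := ∑ j, Bb (θ j) + (1/2) * ∑ j, ∑ k, Bb (θ j + θ k)
      + (1/2) * ∑ j, ∑ k, (if j = k then 0 else Bb (θ j - θ k)) with hC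
  have hsum1 : 0 ≤ ∑ j, Bb (θ j) := Finset.sum_nonneg fun j _ => Bb_nonneg _
  have hsum2 : 0 ≤ ∑ j : Fin ℓ, ∑ k : Fin ℓ, Bb (θ j + θ k) :=
    Finset.sum_nonneg fun j _ => Finset.sum_nonneg fun k _ => Bb_nonneg _
  have hsum3 : 0 ≤ ∑ j : Fin ℓ, ∑ k : Fin ℓ, (if j = k then 0 else Bb (θ j - θ k)) :=
    Finset.sum_nonneg fun j _ => Finset.sum_nonneg fun k _ => by
      by_cases h : j = k <;> simp [h, Bb_nonneg]
  set Kv : ℕ := ⌈5 * C⌉₊ with hKv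
  refine ⟨Kv, ?_⟩
  intro r γ hγc
  obtain ⟨j₀, hj₀⟩ := Finite.exists_max fun j => |r j|
  -- hj₀ ready
  set M : ℝ := |r j₀| with hMdef
  have hM0 : 0 ≤ M := abs_nonneg _
  have hsup : (⨆ j, |r j|) = M :=
    le_antisymm (ciSup_le fun k => hj₀ k)
      (le_ciSup (f := fun j => |r j|) (Set.Finite.bddAbove (Set.finite_range _)) j₀)
  rw [hsup]
  rcases eq_or_lt_of_le hM0 with hM | hMpos
  · refine ⟨0, Nat.zero_le _, ?_⟩
    have hz : ∀ j, r j = 0 := fun j => abs_nonpos_iff.mp ((hj₀ j).trans hM.symm.le)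
    simp [hz, ← hM]
  by_contra hcon
  push_neg at hcon
  set N : ℕ := Kv + 1 with hN
  set s : ℝ := if 0 ≤ r j₀ then 1 else -1 with hs
  have hs1 : |s| = 1 := by rw [hs]; split <;> norm_num
  have hsr : s * r j₀ = M := by
    rw [hs, hMdef]
    split_ifs with h
    · rw [abs_of_nonneg h]; ring
    · rw [abs_of_neg (lt_of_not_ge h)]; ring
  have hAb : ∀ j, |∑ i ∈ Finset.range N, Real.cos (i * θ j + γ j)| ≤ Bb (θ j) :=
    fun j => cos_sum_bound (hθne1 j) _ N
  have hw0 : ∀ i : ℕ, 0 ≤ 1 - s * Real.cos (i * θ j₀ + γ j₀) := by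
    intro i
    have h1 : s * Real.cos (i * θ j₀ + γ j₀) ≤ 1 := by
      have := mul_le_of_abs hs1.le (Real.abs_cos_le_one ((i:ℝ) * θ j₀ + γ j₀))
      simpa using this
    linarith
  set S : ℝ := ∑ i ∈ Finset.range N,
      (∑ j, r j * Real.cos (i * θ j + γ j)) * (1 - s * Real.cos (i * θ j₀ + γ j₀)) with hS
  -- lower bound
  have hlow : -(M/4) * N - M/4 * Bb (θ j₀) ≤ S := by
    have hstep : ∀ i ∈ Finset.range N,
        -(M/4) * (1 - s * Real.cos (i * θ j₀ + γ j₀))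
          ≤ (∑ j, r j * Real.cos (i * θ j + γ j)) * (1 - s * Real.cos (i * θ j₀ + γ j₀)) := by
      intro i hi
      refine mul_le_mul_of_nonneg_right ?_ (hw0 i)
      have hile : i ≤ Kv := by
        have := Finset.mem_range.mp hi
        omega
      have := hcon i hile
      linarith
    have h1 : ∑ i ∈ Finset.range N, -(M/4) * (1 - s * Real.cos (i * θ j₀ + γ j₀)) ≤ S :=
      Finset.sum_le_sum hstep
    have h2 : ∑ i ∈ Finset.range N, -(M/4) * (1 - s * Real.cos (i * θ j₀ + γ j₀))
        = -(M/4) * ((N : ℝ) - s * ∑ i ∈ Finset.range N, Real.cos (i * θ j₀ + γ j₀)) := by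
      rw [← Finset.mul_sum]
      congr 1
      rw [Finset.sum_sub_distrib, Finset.sum_const, Finset.card_range, ← Finset.mul_sum]
      simp
    have h3 : -(Bb (θ j₀)) ≤ s * ∑ i ∈ Finset.range N, Real.cos (i * θ j₀ + γ j₀) := by
      have h4 := neg_abs_le (s * ∑ i ∈ Finset.range N, Real.cos (i * θ j₀ + γ j₀))
      rw [abs_mul, hs1, one_mul] at h4
      linarith [hAb j₀]
    rw [h2] at h1
    nlinarith [mul_le_mul_of_nonneg_left h3 (show (0:ℝ) ≤ M/4 by linarith)]
  -- swap sums
  have hpt : ∀ (i : ℕ) (j : Fin ℓ),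
      r j * Real.cos (i * θ j + γ j) * (1 - s * Real.cos (i * θ j₀ + γ j₀))
      = r j * Real.cos (i * θ j + γ j) - s * r j / 2 *
        (Real.cos (i * (θ j - θ j₀) + (γ j - γ j₀)) + Real.cos (i * (θ j + θ j₀) + (γ j + γ j₀))) := by
    intro i j
    have e1 : (i:ℝ) * (θ j - θ j₀) + (γ j - γ j₀) = (i * θ j + γ j) - (i * θ j₀ + γ j₀) := by ring
    have e2 : (i:ℝ) * (θ j + θ j₀) + (γ j + γ j₀) = (i * θ j + γ j) + (i * θ j₀ + γ j₀) := by ring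
    rw [e1, e2]; exact pointwise _ _ _ _
  have hSwap : S = ∑ j, (r j * (∑ i ∈ Finset.range N, Real.cos (i * θ j + γ j))
      - s * r j / 2 * ((∑ i ∈ Finset.range N, Real.cos (i * (θ j - θ j₀) + (γ j - γ j₀)))
        + (∑ i ∈ Finset.range N, Real.cos (i * (θ j + θ j₀) + (γ j + γ j₀))))) := by
    rw [hS]
    calc ∑ i ∈ Finset.range N,
          (∑ j, r j * Real.cos (i * θ j + γ j)) * (1 - s * Real.cos (i * θ j₀ + γ j₀))
        = ∑ i ∈ Finset.range N, ∑ j, (r j * Real.cos (i * θ j + γ j) - s * r j / 2 *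
            (Real.cos (i * (θ j - θ j₀) + (γ j - γ j₀))
              + Real.cos (i * (θ j + θ j₀) + (γ j + γ j₀)))) := by
          refine Finset.sum_congr rfl fun i _ => ?_
          rw [Finset.sum_mul]
          exact Finset.sum_congr rfl fun j _ => hpt i j
      _ = ∑ j, ∑ i ∈ Finset.range N, (r j * Real.cos (i * θ j + γ j) - s * r j / 2 *
            (Real.cos (i * (θ j - θ j₀) + (γ j - γ j₀))
              + Real.cos (i * (θ j + θ j₀) + (γ j + γ j₀)))) := Finset.sum_comm
      _ = _ := by
          refine Finset.sum_congr rfl fun j _ => ?_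
          rw [Finset.sum_sub_distrib, ← Finset.mul_sum, ← Finset.mul_sum, Finset.sum_add_distrib]
  -- per-term upper bound
  have hterm : ∀ j : Fin ℓ,
      r j * (∑ i ∈ Finset.range N, Real.cos (i * θ j + γ j))
        - s * r j / 2 * ((∑ i ∈ Finset.range N, Real.cos (i * (θ j - θ j₀) + (γ j - γ j₀)))
          + (∑ i ∈ Finset.range N, Real.cos (i * (θ j + θ j₀) + (γ j + γ j₀))))
      ≤ (if j = j₀ then -(M/2) * (N:ℝ) else 0)
        + (M * Bb (θ j) + M/2 * (∑ k, Bb (θ j + θ k))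
          + M/2 * (∑ k, if j = k then 0 else Bb (θ j - θ k))) := by
    intro j
    have hrA : r j * (∑ i ∈ Finset.range N, Real.cos (i * θ j + γ j)) ≤ M * Bb (θ j) :=
      mul_le_of_abs (hj₀ j) (hAb j)
    have hsumnn : (0:ℝ) ≤ ∑ k, Bb (θ j + θ k) :=
      Finset.sum_nonneg fun k _ => Bb_nonneg _
    have hdiffnn : (0:ℝ) ≤ ∑ k, (if j = k then 0 else Bb (θ j - θ k)) :=
      Finset.sum_nonneg fun k _ => by by_cases h : j = k <;> simp [h, Bb_nonneg]
    have hsingleE : Bb (θ j + θ j₀) ≤ ∑ k, Bb (θ j + θ k) :=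
      Finset.single_le_sum (f := fun k => Bb (θ j + θ k)) (fun k _ => Bb_nonneg _) (Finset.mem_univ j₀)
    have hNn : (0:ℝ) ≤ (N:ℝ) := Nat.cast_nonneg N
    rcases eq_or_ne j j₀ with hje | hne
    · -- j = j₀
      rw [hje, if_pos rfl]
      have hDval : ∑ i ∈ Finset.range N, Real.cos (i * (θ j₀ - θ j₀) + (γ j₀ - γ j₀)) = N := by
        simp
      rw [hDval]
      have hrA0 : r j₀ * (∑ i ∈ Finset.range N, Real.cos (i * θ j₀ + γ j₀)) ≤ M * Bb (θ j₀) :=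
        mul_le_of_abs (hj₀ j₀) (hAb j₀)
      have hsingleE0 : Bb (θ j₀ + θ j₀) ≤ ∑ k, Bb (θ j₀ + θ k) :=
        Finset.single_le_sum (f := fun k => Bb (θ j₀ + θ k)) (fun k _ => Bb_nonneg _) (Finset.mem_univ j₀)
      have hsumnn0 : (0:ℝ) ≤ ∑ k, Bb (θ j₀ + θ k) :=
        Finset.sum_nonneg fun k _ => Bb_nonneg _
      have hdiffnn0 : (0:ℝ) ≤ ∑ k, (if j₀ = k then 0 else Bb (θ j₀ - θ k)) :=
        Finset.sum_nonneg fun k _ => by by_cases h : j₀ = k <;> simp [h, Bb_nonneg]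
      rcases eq_or_lt_of_le (hθ j₀).2 with hpi | hlt
      · -- θ j₀ = π
        have hEval : ∑ i ∈ Finset.range N, Real.cos (i * (θ j₀ + θ j₀) + (γ j₀ + γ j₀)) = N := by
          have hone : ∀ i : ℕ, Real.cos (i * (θ j₀ + θ j₀) + (γ j₀ + γ j₀)) = 1 := by
            intro i
            rcases hγc j₀ hpi with hg | hg
            · have e : (i:ℝ) * (θ j₀ + θ j₀) + (γ j₀ + γ j₀) = (i:ℕ) * (2 * Real.pi) := by
                rw [hpi, hg]; ring
              rw [e, Real.cos_nat_mul_two_pi]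
            · have e : (i:ℝ) * (θ j₀ + θ j₀) + (γ j₀ + γ j₀) = ((i + 1 : ℕ) : ℝ) * (2 * Real.pi) := by
                rw [hpi, hg]; push_cast; ring
              rw [e, Real.cos_nat_mul_two_pi]
          rw [Finset.sum_congr rfl fun i _ => hone i]
          simp
        rw [hEval]
        have e3 : s * r j₀ / 2 * ((N:ℝ) + (N:ℝ)) = M * N := by
          rw [show s * r j₀ / 2 * ((N:ℝ) + (N:ℝ)) = s * r j₀ * N by ring, hsr]
        rw [e3]
        have hMN : (0:ℝ) ≤ M * N := mul_nonneg hM0 hNn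
        linarith [mul_nonneg (show (0:ℝ) ≤ M/2 by linarith) hsumnn0,
          mul_nonneg (show (0:ℝ) ≤ M/2 by linarith) hdiffnn0]
      · -- θ j₀ < π
        have hEb : |∑ i ∈ Finset.range N, Real.cos (i * (θ j₀ + θ j₀) + (γ j₀ + γ j₀))|
            ≤ Bb (θ j₀ + θ j₀) := by
          refine cos_sum_bound (exp_ne_one_of ?_ ?_) _ N
          · exact ne_of_gt (by linarith [(hθ j₀).1])
          · rw [abs_of_pos (by linarith [(hθ j₀).1])]; linarith
        have habs2 : |-(s * r j₀ / 2)| = M / 2 := by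
          rw [abs_neg, abs_div, abs_mul, hs1, one_mul, ← hMdef, abs_two]
        have hEterm : (-(s * r j₀ / 2)) *
              (∑ i ∈ Finset.range N, Real.cos (i * (θ j₀ + θ j₀) + (γ j₀ + γ j₀)))
            ≤ M/2 * Bb (θ j₀ + θ j₀) := mul_le_of_abs habs2.le hEb
        have e4 : s * r j₀ / 2 * ((N:ℝ)
              + (∑ i ∈ Finset.range N, Real.cos (i * (θ j₀ + θ j₀) + (γ j₀ + γ j₀))))
            = M/2 * N - (-(s * r j₀ / 2)) *
              (∑ i ∈ Finset.range N, Real.cos (i * (θ j₀ + θ j₀) + (γ j₀ + γ j₀))) := by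
          rw [show s * r j₀ / 2 * ((N:ℝ)
              + (∑ i ∈ Finset.range N, Real.cos (i * (θ j₀ + θ j₀) + (γ j₀ + γ j₀))))
              = (s * r j₀) * ((N:ℝ)/2) + (s * r j₀ / 2)
                * (∑ i ∈ Finset.range N, Real.cos (i * (θ j₀ + θ j₀) + (γ j₀ + γ j₀))) by ring, hsr]
          ring
        rw [e4]
        have h5 : M/2 * Bb (θ j₀ + θ j₀) ≤ M/2 * ∑ k, Bb (θ j₀ + θ k) :=
          mul_le_mul_of_nonneg_left hsingleE0 (by linarith)
        linarith [mul_nonneg (show (0:ℝ) ≤ M/2 by linarith) hdiffnn0]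
    · -- j ≠ j₀
      rw [if_neg hne]
      have hDb : |∑ i ∈ Finset.range N, Real.cos (i * (θ j - θ j₀) + (γ j - γ j₀))|
          ≤ Bb (θ j - θ j₀) := by
        refine cos_sum_bound (exp_ne_one_of ?_ ?_) _ N
        · exact sub_ne_zero.mpr fun h => hne (hinj h)
        · refine abs_lt.mpr ⟨?_, ?_⟩
          · linarith [(hθ j).1, (hθ j₀).2]
          · linarith [(hθ j).2, (hθ j₀).1]
      have hsum_lt : θ j + θ j₀ < 2 * Real.pi := by
        rcases eq_or_lt_of_le (hθ j).2 with h | h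
        · have h0 : θ j₀ ≠ Real.pi := fun hh => hne (hinj (h.trans hh.symm))
          have := lt_of_le_of_ne (hθ j₀).2 h0
          linarith
        · linarith [(hθ j₀).2]
      have hEb : |∑ i ∈ Finset.range N, Real.cos (i * (θ j + θ j₀) + (γ j + γ j₀))|
          ≤ Bb (θ j + θ j₀) := by
        refine cos_sum_bound (exp_ne_one_of ?_ ?_) _ N
        · exact ne_of_gt (add_pos (hθ j).1 (hθ j₀).1)
        · rw [abs_of_pos (add_pos (hθ j).1 (hθ j₀).1)]; exact hsum_lt
      have habs2 : |-(s * r j / 2)| ≤ M / 2 := by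
        rw [abs_neg, abs_div, abs_mul, hs1, one_mul, abs_two]
        linarith [hj₀ j]
      have hDE : |(∑ i ∈ Finset.range N, Real.cos (i * (θ j - θ j₀) + (γ j - γ j₀)))
            + (∑ i ∈ Finset.range N, Real.cos (i * (θ j + θ j₀) + (γ j + γ j₀)))|
          ≤ Bb (θ j - θ j₀) + Bb (θ j + θ j₀) :=
        (abs_add_le _ _).trans (add_le_add hDb hEb)
      have hmain : (-(s * r j / 2)) *
            ((∑ i ∈ Finset.range N, Real.cos (i * (θ j - θ j₀) + (γ j - γ j₀)))
              + (∑ i ∈ Finset.range N, Real.cos (i * (θ j + θ j₀) + (γ j + γ j₀))))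
          ≤ M/2 * (Bb (θ j - θ j₀) + Bb (θ j + θ j₀)) := mul_le_of_abs habs2 hDE
      have hsingleD : (if j = j₀ then 0 else Bb (θ j - θ j₀))
          ≤ ∑ k, (if j = k then 0 else Bb (θ j - θ k)) :=
        Finset.single_le_sum (f := fun k => if j = k then 0 else Bb (θ j - θ k))
          (fun k _ => by by_cases h : j = k <;> simp [h, Bb_nonneg])
          (Finset.mem_univ j₀)
      rw [if_neg hne] at hsingleD
      have hE2 : M/2 * Bb (θ j + θ j₀) ≤ M/2 * ∑ k, Bb (θ j + θ k) :=
        mul_le_mul_of_nonneg_left hsingleE (by linarith)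
      have hD2 : M/2 * Bb (θ j - θ j₀) ≤ M/2 * ∑ k, (if j = k then 0 else Bb (θ j - θ k)) :=
        mul_le_mul_of_nonneg_left hsingleD (by linarith)
      have e5 : -(s * r j / 2 * ((∑ i ∈ Finset.range N, Real.cos (i * (θ j - θ j₀) + (γ j - γ j₀)))
            + (∑ i ∈ Finset.range N, Real.cos (i * (θ j + θ j₀) + (γ j + γ j₀)))))
          = (-(s * r j / 2)) * ((∑ i ∈ Finset.range N, Real.cos (i * (θ j - θ j₀) + (γ j - γ j₀)))
            + (∑ i ∈ Finset.range N, Real.cos (i * (θ j + θ j₀) + (γ j + γ j₀)))) := by ring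
      linarith [hrA, hmain, hE2, hD2, e5.ge, e5.le]
  -- global upper bound
  have hup : S ≤ -(M/2) * (N:ℝ) + M * C := by
    rw [hSwap]
    refine (Finset.sum_le_sum fun j _ => hterm j).trans ?_
    rw [Finset.sum_add_distrib]
    have hite : ∑ j : Fin ℓ, (if j = j₀ then -(M/2) * (N:ℝ) else 0) = -(M/2) * (N:ℝ) := by
      simp
    rw [hite, Finset.sum_add_distrib, Finset.sum_add_distrib,
      ← Finset.mul_sum, ← Finset.mul_sum, ← Finset.mul_sum, hC]
    apply le_of_eq
    ring
  -- conclude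
  have hBC : Bb (θ j₀) ≤ C := by
    have h1 : Bb (θ j₀) ≤ ∑ j, Bb (θ j) :=
      Finset.single_le_sum (f := fun j => Bb (θ j)) (fun k _ => Bb_nonneg _) (Finset.mem_univ j₀)
    rw [hC]; linarith
  have hfin : (N:ℝ) ≤ 5 * C := by
    have h1 : M/4 * (N:ℝ) ≤ M/4 * (5 * C) := by
      have h2 := mul_le_mul_of_nonneg_left hBC (show (0:ℝ) ≤ M/4 by linarith)
      have h3 := hlow.trans hup
      linarith
    exact le_of_mul_le_mul_left h1 (by linarith)
  have h5C : 5 * C ≤ (Kv:ℝ) := by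
    rw [hKv]
    exact_mod_cast Nat.le_ceil (5 * C)
  have hNval : (N:ℝ) = (Kv:ℝ) + 1 := by rw [hN]; push_cast; ring
  linarith
end

section
/- Let (X_n) be an auto-regressive process X_n = ∑_{j=1}^{L} a_j X_{n−j} + ξ_n with zero initial conditions X_{−L} = … = X_{−1} = 0 and i.i.d. standard Gaussian inputs ξ_n. Then there exists a constant 0 < c < 1 such that the persistence probability p_N = P(X_n ≥ 0 for all 0 ≤ n < N) satisfies p_N ≥ c^N for all N ∈ ℕ. -/
open MeasureTheory ProbabilityTheory
open scoped BigOperators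

noncomputable def arG (a : ℕ → ℝ) (L : ℕ) (x : ℕ → ℝ) : ℕ → ℝ
  | n => (∑ j ∈ Finset.Icc 1 L,
      if h : 1 ≤ j ∧ j ≤ n then a j * arG a L x (n - j) else 0) + x n
  decreasing_by exact Nat.sub_lt (by omega) (by omega)

lemma arG_def (a : ℕ → ℝ) (L : ℕ) (x : ℕ → ℝ) (n : ℕ) :
    arG a L x n = (∑ j ∈ Finset.Icc 1 L,
      if h : 1 ≤ j ∧ j ≤ n then a j * arG a L x (n - j) else 0) + x n := by
  rw [arG]

lemma arG_congr (a : ℕ → ℝ) (L : ℕ) (x y : ℕ → ℝ) (n : ℕ)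
    (h : ∀ k ≤ n, x k = y k) : arG a L x n = arG a L y n := by
  induction n using Nat.strong_induction_on with
  | _ n ih =>
    rw [arG_def, arG_def, h n le_rfl]
    congr 1
    refine Finset.sum_congr rfl fun j hj => ?_
    by_cases hjn : 1 ≤ j ∧ j ≤ n
    · rw [dif_pos hjn, dif_pos hjn, ih (n - j) (Nat.sub_lt (by omega) (by omega))
        (fun k hk => h k (le_trans hk (Nat.sub_le _ _)))]
    · rw [dif_neg hjn, dif_neg hjn]

lemma measurable_arG (a : ℕ → ℝ) (L : ℕ) (n : ℕ) :
    Measurable (fun x : ℕ → ℝ => arG a L x n) := by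
  induction n using Nat.strong_induction_on with
  | _ n ih =>
    have hfun : (fun x : ℕ → ℝ => arG a L x n) = fun x => (∑ j ∈ Finset.Icc 1 L,
        if h : 1 ≤ j ∧ j ≤ n then a j * arG a L x (n - j) else 0) + x n := by
      funext x; rw [arG_def]
    rw [hfun]
    refine Measurable.add ?_ (measurable_pi_apply n)
    refine Finset.measurable_sum _ fun j hj => ?_
    by_cases hjn : 1 ≤ j ∧ j ≤ n
    · simp only [dif_pos hjn]
      exact (ih (n - j) (Nat.sub_lt (by omega) (by omega))).const_mul _
    · simp only [dif_neg hjn]; exact measurable_const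

lemma gauss_interval_lb (A h : ℝ) (hA : 0 ≤ A) (hh : |h| ≤ A) :
    ENNReal.ofReal (gaussianPDFReal 0 1 (2 + A))
      ≤ gaussianReal 0 1 (Set.Icc (1 - h) (2 - h)) := by
  rw [gaussianReal_apply 0 one_ne_zero]
  have hvol : volume (Set.Icc (1 - h) (2 - h)) = 1 := by
    rw [Real.volume_Icc]
    norm_num
  have hle : ∀ x ∈ Set.Icc (1 - h) (2 - h),
      ENNReal.ofReal (gaussianPDFReal 0 1 (2 + A)) ≤ gaussianPDF 0 1 x := by
    intro x hx
    rw [Set.mem_Icc] at hx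
    have habs : |h| ≤ A := hh
    rw [abs_le] at habs
    unfold gaussianPDF
    apply ENNReal.ofReal_le_ofReal
    unfold gaussianPDFReal
    simp only [NNReal.coe_one, mul_one, sub_zero]
    have hsq : x ^ 2 ≤ (2 + A) ^ 2 := by nlinarith [hx.1, hx.2, habs.1, habs.2]
    gcongr
  calc ENNReal.ofReal (gaussianPDFReal 0 1 (2 + A))
      = ENNReal.ofReal (gaussianPDFReal 0 1 (2 + A)) * volume (Set.Icc (1 - h) (2 - h)) := by
        rw [hvol, mul_one]
    _ = ∫⁻ _ in Set.Icc (1 - h) (2 - h), ENNReal.ofReal (gaussianPDFReal 0 1 (2 + A)) := by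
        rw [setLIntegral_const]
    _ ≤ ∫⁻ x in Set.Icc (1 - h) (2 - h), gaussianPDF 0 1 x :=
        setLIntegral_mono (measurable_gaussianPDF 0 1) hle

lemma drift_abs_bound (a : ℕ → ℝ) (L : ℕ) (x : ℕ → ℝ) (N : ℕ)
    (hx : ∀ k, k < N → arG a L x k ∈ Set.Icc (1:ℝ) 2) :
    |∑ j ∈ Finset.Icc 1 L, if h : 1 ≤ j ∧ j ≤ N then a j * arG a L x (N - j) else 0|
      ≤ 2 * ∑ j ∈ Finset.Icc 1 L, |a j| := by
  calc |∑ j ∈ Finset.Icc 1 L, if h : 1 ≤ j ∧ j ≤ N then a j * arG a L x (N - j) else 0|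
      ≤ ∑ j ∈ Finset.Icc 1 L, |if h : 1 ≤ j ∧ j ≤ N then a j * arG a L x (N - j) else 0| :=
        Finset.abs_sum_le_sum_abs _ _
    _ ≤ ∑ j ∈ Finset.Icc 1 L, 2 * |a j| := by
        refine Finset.sum_le_sum fun j hj => ?_
        by_cases hjn : 1 ≤ j ∧ j ≤ N
        · rw [dif_pos hjn, abs_mul]
          have hG := hx (N - j) (Nat.sub_lt (by omega) (by omega))
          rw [Set.mem_Icc] at hG
          have : |arG a L x (N - j)| ≤ 2 := by rw [abs_le]; constructor <;> linarith [hG.1, hG.2]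
          calc |a j| * |arG a L x (N - j)| ≤ |a j| * 2 :=
                mul_le_mul_of_nonneg_left this (abs_nonneg _)
            _ = 2 * |a j| := by ring
        · rw [dif_neg hjn, abs_zero]; positivity
    _ = 2 * ∑ j ∈ Finset.Icc 1 L, |a j| := by rw [Finset.mul_sum]

lemma ar_step {Ω : Type*} [MeasureSpace Ω] [IsProbabilityMeasure (ℙ : Measure Ω)]
    (L : ℕ) (a : ℕ → ℝ) (ξ : ℕ → Ω → ℝ) (hmeas : ∀ n, Measurable (ξ n))
    (hgauss : ∀ n, Measure.map (ξ n) ℙ = gaussianReal 0 1)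
    (hindep : iIndepFun ξ ℙ) (N : ℕ) :
    ENNReal.ofReal (gaussianPDFReal 0 1 (2 + 2 * ∑ j ∈ Finset.Icc 1 L, |a j|))
        * ℙ {ω | ∀ k, k < N → arG a L (fun i => ξ i ω) k ∈ Set.Icc (1:ℝ) 2}
      ≤ ℙ {ω | ∀ k, k < N + 1 → arG a L (fun i => ξ i ω) k ∈ Set.Icc (1:ℝ) 2} := by
  classical
  set A : ℝ := 2 * ∑ j ∈ Finset.Icc 1 L, |a j| with hA_def
  set S : Finset ℕ := Finset.range N with hS_def
  set T : Ω → (S → ℝ) := fun ω i => ξ i ω with hT_def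
  have hT_meas : Measurable T := measurable_pi_lambda _ fun i => hmeas i
  -- extension of a vector to a function on ℕ
  set ext : (S → ℝ) → (ℕ → ℝ) := fun y k => if hk : k ∈ S then y ⟨k, hk⟩ else 0 with hext_def
  have hext_meas : Measurable ext := by
    refine measurable_pi_lambda _ fun k => ?_
    by_cases hk : k ∈ S
    · simp only [hext_def, dif_pos hk]; exact measurable_pi_apply _
    · simp only [hext_def, dif_neg hk]; exact measurable_const
  -- ext ∘ T agrees with ξ on coordinates < N
  have hagree : ∀ (ω : Ω) (k : ℕ), k < N → arG a L (ext (T ω)) k = arG a L (fun i => ξ i ω) k := by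
    intro ω k hk
    refine arG_congr _ _ _ _ _ fun m hm => ?_
    have hmS : m ∈ S := Finset.mem_range.mpr (lt_of_le_of_lt hm hk)
    simp only [hext_def, dif_pos hmS, hT_def]
  set B : Set (S → ℝ) := {y | ∀ k, k < N → arG a L (ext y) k ∈ Set.Icc (1:ℝ) 2} with hB_def
  have hB_meas : MeasurableSet B := by
    have : B = ⋂ k ∈ Set.Iio N, (fun y => arG a L (ext y) k) ⁻¹' Set.Icc (1:ℝ) 2 := by
      ext y; simp [hB_def, Set.mem_Iio]
    rw [this]
    exact MeasurableSet.biInter (Set.to_countable _) fun k _ =>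
      ((measurable_arG a L k).comp hext_meas) measurableSet_Icc
  set H : (S → ℝ) → ℝ := fun y =>
    ∑ j ∈ Finset.Icc 1 L, if h : 1 ≤ j ∧ j ≤ N then a j * arG a L (ext y) (N - j) else 0
    with hH_def
  have hH_meas : Measurable H := by
    refine Finset.measurable_sum _ fun j hj => ?_
    by_cases hjn : 1 ≤ j ∧ j ≤ N
    · simp only [hH_def, dif_pos hjn]
      exact ((measurable_arG a L (N - j)).comp hext_meas).const_mul _
    · simp only [hH_def, dif_neg hjn]; exact measurable_const
  have hH_bound : ∀ y ∈ B, |H y| ≤ A := fun y hy => drift_abs_bound a L (ext y) N hy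
  -- decomposition of arG at time N
  have hGN : ∀ ω : Ω, arG a L (fun i => ξ i ω) N = H (T ω) + ξ N ω := by
    intro ω
    rw [arG_def]
    congr 1
    refine Finset.sum_congr rfl fun j hj => ?_
    by_cases hjn : 1 ≤ j ∧ j ≤ N
    · rw [dif_pos hjn, dif_pos hjn, hagree ω (N - j) (Nat.sub_lt (by omega) (by omega))]
    · rw [dif_neg hjn, dif_neg hjn]
  -- the product set
  set D : Set ((S → ℝ) × ℝ) :=
    {p | p.1 ∈ B ∧ p.2 ∈ Set.Icc (1 - H p.1) (2 - H p.1)} with hD_def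
  have hD_meas : MeasurableSet D := by
    refine MeasurableSet.inter (measurable_fst hB_meas) ?_
    exact MeasurableSet.inter
      (measurableSet_le ((hH_meas.comp measurable_fst).const_sub 1) measurable_snd)
      (measurableSet_le measurable_snd ((hH_meas.comp measurable_fst).const_sub 2))
  -- identify the event at time N+1
  have hEvent : {ω | ∀ k, k < N + 1 → arG a L (fun i => ξ i ω) k ∈ Set.Icc (1:ℝ) 2}
      = (fun ω => (T ω, ξ N ω)) ⁻¹' D := by
    ext ω
    simp only [Set.mem_setOf_eq, Set.mem_preimage, hD_def, Set.mem_setOf_eq, hB_def,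
      Set.mem_Icc]
    constructor
    · intro hω
      refine ⟨fun k hk => by rw [hagree ω k hk]; exact hω k (by omega), ?_⟩
      have := hω N (by omega)
      rw [hGN ω] at this
      constructor <;> linarith [this.1, this.2]
    · rintro ⟨h1, h2⟩
      intro k hk
      rcases Nat.lt_or_ge k N with hkN | hkN
      · rw [← hagree ω k hkN]; exact h1 k hkN
      · have hkN' : k = N := by omega
        subst hkN'
        rw [hGN ω]
        constructor <;> linarith [h2.1, h2.2]
  have hEventN : {ω | ∀ k, k < N → arG a L (fun i => ξ i ω) k ∈ Set.Icc (1:ℝ) 2} = T ⁻¹' B := by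
    ext ω
    simp only [Set.mem_setOf_eq, Set.mem_preimage, hB_def, Set.mem_setOf_eq]
    constructor
    · intro hω k hk; rw [hagree ω k hk]; exact hω k hk
    · intro hω k hk; rw [← hagree ω k hk]; exact hω k hk
  -- independence
  have hindepTN : IndepFun T (ξ N) ℙ := by
    have hdisj : Disjoint S {N} := by
      simp only [hS_def, Finset.disjoint_singleton_right, Finset.mem_range]
      omega
    have h0 := hindep.indepFun_finset S {N} hdisj hmeas
    have h1 := h0.comp (φ := id) (ψ := fun v : ({N} : Finset ℕ) → ℝ => v ⟨N, Finset.mem_singleton_self N⟩)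
      measurable_id (measurable_pi_apply _ : Measurable (fun v : ({N} : Finset ℕ) → ℝ => v ⟨N, Finset.mem_singleton_self N⟩))
    exact h1
  have hjoint : Measure.map (fun ω => (T ω, ξ N ω)) ℙ
      = (Measure.map T ℙ).prod (gaussianReal 0 1) := by
    rw [← hgauss N]
    exact (indepFun_iff_map_prod_eq_prod_map_map hT_meas.aemeasurable
      (hmeas N).aemeasurable).mp hindepTN
  -- compute
  have hA_nonneg : (0:ℝ) ≤ A := by positivity
  calc ENNReal.ofReal (gaussianPDFReal 0 1 (2 + A))
        * ℙ {ω | ∀ k, k < N → arG a L (fun i => ξ i ω) k ∈ Set.Icc (1:ℝ) 2}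
      = ENNReal.ofReal (gaussianPDFReal 0 1 (2 + A)) * (Measure.map T ℙ) B := by
        rw [hEventN, Measure.map_apply hT_meas hB_meas]
    _ = ∫⁻ _ in B, ENNReal.ofReal (gaussianPDFReal 0 1 (2 + A)) ∂(Measure.map T ℙ) := by
        rw [setLIntegral_const]
    _ ≤ ∫⁻ y in B, gaussianReal 0 1 (Set.Icc (1 - H y) (2 - H y)) ∂(Measure.map T ℙ) := by
        refine setLIntegral_mono' hB_meas fun y hy => ?_
        exact gauss_interval_lb A (H y) hA_nonneg (hH_bound y hy)
    _ = ∫⁻ y in B, gaussianReal 0 1 (Prod.mk y ⁻¹' D) ∂(Measure.map T ℙ) := by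
        refine setLIntegral_congr_fun hB_meas (fun y hy => ?_)
        congr 1
        ext t
        simp [hD_def, hy]
    _ ≤ ∫⁻ y, gaussianReal 0 1 (Prod.mk y ⁻¹' D) ∂(Measure.map T ℙ) :=
        setLIntegral_le_lintegral _ _
    _ = ((Measure.map T ℙ).prod (gaussianReal 0 1)) D := (Measure.prod_apply hD_meas).symm
    _ = Measure.map (fun ω => (T ω, ξ N ω)) ℙ D := by rw [hjoint]
    _ = ℙ ((fun ω => (T ω, ξ N ω)) ⁻¹' D) := by
        rw [Measure.map_apply (hT_meas.prodMk (hmeas N)) hD_meas]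
    _ = ℙ {ω | ∀ k, k < N + 1 → arG a L (fun i => ξ i ω) k ∈ Set.Icc (1:ℝ) 2} := by
        rw [hEvent]

/-- For a Gaussian AR(L) process with zero initial conditions, the persistence
probability satisfies `p_N ≥ c^N` for some `0 < c < 1`. -/
theorem stmt5 {Ω : Type*} [MeasureSpace Ω] [IsProbabilityMeasure (ℙ : Measure Ω)]
    (L : ℕ) (hL : 0 < L) (a : ℕ → ℝ)
    (ξ : ℕ → Ω → ℝ) (hmeas : ∀ n, Measurable (ξ n))
    (hgauss : ∀ n, Measure.map (ξ n) ℙ = gaussianReal 0 1)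
    (hindep : iIndepFun ξ ℙ)
    (X : ℤ → Ω → ℝ)
    (hinit : ∀ n : ℤ, n < 0 → X n = 0)
    (hrec : ∀ (n : ℕ) (ω : Ω),
      X n ω = ∑ j ∈ Finset.Icc 1 L, a j * X ((n : ℤ) - (j : ℤ)) ω + ξ n ω) :
    ∃ c : ℝ, 0 < c ∧ c < 1 ∧ ∀ N : ℕ,
      c ^ N ≤ (ℙ {ω | ∀ n : ℕ, n < N → 0 ≤ X n ω}).toReal := by
  have hXG : ∀ (n : ℕ) (ω : Ω), X n ω = arG a L (fun k => ξ k ω) n := by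
    intro n
    induction n using Nat.strong_induction_on with
    | _ n ih =>
      intro ω
      rw [hrec n ω, arG_def]
      congr 1
      refine Finset.sum_congr rfl fun j hj => ?_
      have hj1 : 1 ≤ j ∧ j ≤ L := by simpa [Finset.mem_Icc] using hj
      by_cases hjn : 1 ≤ j ∧ j ≤ n
      · rw [dif_pos hjn]
        have hcast : ((n:ℤ) - (j:ℤ)) = ((n - j : ℕ) : ℤ) := by omega
        rw [hcast, ih (n - j) (Nat.sub_lt (by omega) (by omega)) ω]
      · rw [dif_neg hjn]
        have hneg : ((n:ℤ) - (j:ℤ)) < 0 := by omega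
        rw [hinit _ hneg]
        simp
  set A : ℝ := 2 * ∑ j ∈ Finset.Icc 1 L, |a j| with hA_def
  set d : ℝ := gaussianPDFReal 0 1 (2 + A) with hd_def
  have hd : 0 < d := gaussianPDFReal_pos _ _ _ one_ne_zero
  set c : ℝ := min d (1/2) with hc_def
  have hc0 : 0 < c := lt_min hd (by norm_num)
  refine ⟨c, hc0, lt_of_le_of_lt (min_le_right _ _) (by norm_num), ?_⟩
  intro N
  have key : ∀ M : ℕ, ENNReal.ofReal c ^ M
      ≤ ℙ {ω | ∀ k, k < M → arG a L (fun i => ξ i ω) k ∈ Set.Icc (1:ℝ) 2} := by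
    intro M
    induction M with
    | zero =>
      have huniv : {ω : Ω | ∀ k, k < 0 → arG a L (fun i => ξ i ω) k ∈ Set.Icc (1:ℝ) 2}
          = Set.univ := by ext ω; simp
      simp [huniv]
    | succ M ih =>
      have hstep := ar_step L a ξ hmeas hgauss hindep M
      calc ENNReal.ofReal c ^ (M + 1)
          = ENNReal.ofReal c * ENNReal.ofReal c ^ M := by rw [pow_succ, mul_comm]
        _ ≤ ENNReal.ofReal d
              * ℙ {ω | ∀ k, k < M → arG a L (fun i => ξ i ω) k ∈ Set.Icc (1:ℝ) 2} :=
            mul_le_mul' (ENNReal.ofReal_le_ofReal (min_le_left _ _)) ih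
        _ ≤ ℙ {ω | ∀ k, k < M + 1 → arG a L (fun i => ξ i ω) k ∈ Set.Icc (1:ℝ) 2} := hstep
  have hsub : {ω : Ω | ∀ k, k < N → arG a L (fun i => ξ i ω) k ∈ Set.Icc (1:ℝ) 2}
      ⊆ {ω | ∀ n : ℕ, n < N → 0 ≤ X n ω} := by
    intro ω hω n hn
    rw [hXG n ω]
    exact le_trans zero_le_one (hω n hn).1
  have hle := le_trans (key N) (measure_mono hsub)
  rw [← ENNReal.ofReal_pow (le_of_lt hc0)] at hle
  exact (ENNReal.ofReal_le_iff_le_toReal (measure_ne_top ℙ _)).mp hle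
end

section
/- Let (S_n^{(m)}) be an integrated random walk of order m driven by i.i.d. standard Gaussians (i.e. the AR process generated by (z−1)^m), and let (f_n) be any deterministic real sequence. Then for every ε > 0 there is c_ε > 0 with c_ε → 0 as ε → 0 such that for all N, P(S_n^{(m)} ≥ f_n + ε n^{m−1/2} for all 1 ≤ n ≤ N) ≥ P(S_n^{(m)} ≥ f_n for all 1 ≤ n ≤ N)^{1+c_ε} · N^{−c_ε}. -/
open MeasureTheory ProbabilityTheory Filter
open scoped BigOperators

open Real
open scoped ENNReal NNReal

namespace Stmt13Aux

/-! ### Combinatorial weights -/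

def W : ℕ → ℕ → ℕ → ℕ
  | 0, n, k => if k ∈ Finset.Icc 1 n then 1 else 0
  | (M+1), n, k => ∑ j ∈ Finset.Icc 1 n, W M j k

lemma W_eq_zero (M : ℕ) : ∀ n k, k ∉ Finset.Icc 1 n → W M n k = 0 := by
  induction M with
  | zero => intro n k hk; simp [W, hk]
  | succ M ih =>
    intro n k hk
    rw [W]
    refine Finset.sum_eq_zero fun j hj => ih j k ?_
    simp only [Finset.mem_Icc] at *
    omega

lemma W_zero_apply (n k : ℕ) (hk : k ∈ Finset.Icc 1 n) : W 0 n k = 1 := by simp [W, hk]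

lemma W_one (M : ℕ) : W M 1 1 = 1 := by
  induction M with
  | zero => simp [W]
  | succ M ih => rw [W]; simpa using ih

lemma Wsum_rec (M n : ℕ) :
    ∑ k ∈ Finset.Icc 1 n, W (M+1) n k = ∑ j ∈ Finset.Icc 1 n, ∑ k ∈ Finset.Icc 1 j, W M j k := by
  simp only [W]
  rw [Finset.sum_comm]
  refine Finset.sum_congr rfl fun j hj => ?_
  refine (Finset.sum_subset ?_ ?_).symm
  · intro k hk; simp only [Finset.mem_Icc] at *; omega
  · intro k _ hk; exact W_eq_zero M j k hk

lemma aux_pow (p n : ℕ) : (n+1)^p * n ≤ n^(p+1) + p * (n+1)^p := by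
  induction p with
  | zero => simpa using le_refl n
  | succ p ih =>
    have h1 : (n+1)^(p+1) * n = (n+1) * ((n+1)^p * n) := by ring
    have h2 : (n+1) * ((n+1)^p * n) ≤ (n+1) * (n^(p+1) + p * (n+1)^p) :=
      Nat.mul_le_mul_left _ ih
    have h3 : n^(p+1) ≤ (n+1)^(p+1) := Nat.pow_le_pow_left (by omega) _
    calc (n+1)^(p+1) * n = (n+1) * ((n+1)^p * n) := h1
      _ ≤ (n+1) * (n^(p+1) + p * (n+1)^p) := h2
      _ = n^(p+2) + n^(p+1) + p * (n+1)^(p+1) := by ring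
      _ ≤ n^(p+2) + (n+1)^(p+1) + p * (n+1)^(p+1) := by omega
      _ = n^(p+2) + (p+1) * (n+1)^(p+1) := by ring

lemma sum_pow_ge (p n : ℕ) : n^(p+1) ≤ (p+1) * ∑ j ∈ Finset.Icc 1 n, j^p := by
  induction n with
  | zero => simp
  | succ n ih =>
    rw [Finset.sum_Icc_succ_top (by omega)]
    have := aux_pow p n
    calc (n+1)^(p+1) = (n+1)^p * n + (n+1)^p := by ring
      _ ≤ n^(p+1) + p * (n+1)^p + (n+1)^p := by omega
      _ = n^(p+1) + (p+1) * (n+1)^p := by ring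
      _ ≤ (p+1) * (∑ j ∈ Finset.Icc 1 n, j^p) + (p+1) * (n+1)^p := by omega
      _ = (p+1) * (∑ j ∈ Finset.Icc 1 n, j^p + (n+1)^p) := by ring

lemma Wsum_ge (M : ℕ) : ∀ n, n^(M+1) ≤ (M+1).factorial * ∑ k ∈ Finset.Icc 1 n, W M n k := by
  induction M with
  | zero =>
    intro n
    have : ∑ k ∈ Finset.Icc 1 n, W 0 n k = n := by
      rw [Finset.sum_congr rfl (fun k hk => W_zero_apply n k hk)]
      simp
    simp [this]
  | succ M ih =>
    intro n
    rw [Wsum_rec]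
    have h1 : ∀ j ∈ Finset.Icc 1 n, j^(M+1) ≤ (M+1).factorial * ∑ k ∈ Finset.Icc 1 j, W M j k :=
      fun j _ => ih j
    calc n^(M+2) ≤ (M+2) * ∑ j ∈ Finset.Icc 1 n, j^(M+1) := sum_pow_ge (M+1) n
      _ ≤ (M+2) * ∑ j ∈ Finset.Icc 1 n, ((M+1).factorial * ∑ k ∈ Finset.Icc 1 j, W M j k) := by
          exact Nat.mul_le_mul_left _ (Finset.sum_le_sum h1)
      _ = (M+2).factorial * ∑ j ∈ Finset.Icc 1 n, ∑ k ∈ Finset.Icc 1 j, W M j k := by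
          rw [← Finset.mul_sum, ← Nat.mul_assoc, ← Nat.factorial_succ]

/-! ### One-dimensional Gaussian computations -/

lemma gaussianPDFReal_shift (c x : ℝ) :
    gaussianPDFReal 0 1 x * Real.exp (c * x - c^2/2) = gaussianPDFReal c 1 x := by
  simp only [gaussianPDFReal, NNReal.coe_one, mul_one, sub_zero]
  rw [mul_assoc, ← Real.exp_add]; congr 1; ring

lemma gauss_withDensity (c : ℝ) :
    (gaussianReal 0 1).withDensity (fun x => ENNReal.ofReal (Real.exp (c * x - c^2/2)))
      = gaussianReal c 1 := by
  rw [gaussianReal_of_var_ne_zero 0 one_ne_zero, gaussianReal_of_var_ne_zero c one_ne_zero,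
    ← withDensity_mul _ (measurable_gaussianPDF 0 1)
      (by fun_prop : Measurable fun x => ENNReal.ofReal (Real.exp (c * x - c^2/2)))]
  congr 1
  funext x
  rw [Pi.mul_apply, gaussianPDF, gaussianPDF,
    ← ENNReal.ofReal_mul (gaussianPDFReal_nonneg 0 1 x), gaussianPDFReal_shift]

lemma lintegral_exp_gauss (c : ℝ) :
    ∫⁻ x, ENNReal.ofReal (Real.exp (c * x - c^2/2)) ∂(gaussianReal 0 1) = 1 := by
  have h := gauss_withDensity c
  have h2 : (gaussianReal c 1) Set.univ = 1 := measure_univ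
  rw [← h, withDensity_apply _ MeasurableSet.univ, setLIntegral_univ] at h2
  exact h2

lemma lintegral_exp_gauss' (a b : ℝ) :
    ∫⁻ x, ENNReal.ofReal (Real.exp (a * x + b)) ∂(gaussianReal 0 1)
      = ENNReal.ofReal (Real.exp (b + a^2/2)) := by
  have key : ∀ x : ℝ, ENNReal.ofReal (Real.exp (a * x + b))
      = ENNReal.ofReal (Real.exp (b + a^2/2)) * ENNReal.ofReal (Real.exp (a * x - a^2/2)) := by
    intro x
    rw [← ENNReal.ofReal_mul (Real.exp_nonneg _), ← Real.exp_add]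
    congr 1
    ring
  simp_rw [key]
  rw [lintegral_const_mul _ (by fun_prop), lintegral_exp_gauss, mul_one]

/-! ### Product-measure computations -/

lemma lintegral_pi_prod {n : ℕ} (μ : Fin n → Measure ℝ) [∀ i, SigmaFinite (μ i)]
    (g : Fin n → ℝ → ℝ≥0∞) (hg : ∀ i, Measurable (g i)) :
    ∫⁻ x : Fin n → ℝ, ∏ i, g i (x i) ∂(Measure.pi μ) = ∏ i, ∫⁻ y, g i y ∂(μ i) := by
  induction n with
  | zero =>
    simp only [Finset.univ_eq_empty, Finset.prod_empty, lintegral_one, Measure.pi_univ]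
  | succ n ih =>
    have hF : Measurable fun x : Fin (n+1) → ℝ => ∏ i, g i (x i) :=
      Finset.measurable_prod _ fun i _ => (hg i).comp (measurable_pi_apply i)
    rw [← ((measurePreserving_piFinSuccAbove μ 0).symm).lintegral_comp_emb
        (MeasurableEquiv.measurableEmbedding _)]
    simp_rw [MeasurableEquiv.piFinSuccAbove_symm_apply, Fin.insertNthEquiv,
      Fin.prod_univ_succ, Fin.insertNth_zero, Equiv.coe_fn_mk, Fin.cons_succ,
      Fin.zero_succAbove, Fin.cons_zero, cast_eq]
    rw [lintegral_prod_mul (f := g 0) (g := fun (x : Fin n → ℝ) => ∏ i, g i.succ (x i))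
      (hg 0).aemeasurable
      (Finset.measurable_prod _ fun i _ =>
        (hg i.succ).comp (measurable_pi_apply i)).aemeasurable]
    rw [ih (fun i => μ i.succ) (fun i => g i.succ) (fun i => hg i.succ)]

lemma indicator_pi_prod {n : ℕ} (s : Fin n → Set ℝ) (g : Fin n → ℝ → ℝ≥0∞)
    (x : Fin n → ℝ) :
    (Set.pi Set.univ s).indicator (fun x => ∏ i, g i (x i)) x
      = ∏ i, (s i).indicator (g i) (x i) := by
  by_cases hx : x ∈ Set.pi Set.univ s
  · rw [Set.indicator_of_mem hx]
    refine Finset.prod_congr rfl fun i _ => ?_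
    rw [Set.indicator_of_mem (hx i (Set.mem_univ i))]
  · rw [Set.indicator_of_notMem hx]
    rw [Set.mem_pi] at hx
    push_neg at hx
    obtain ⟨i, _, hi⟩ := hx
    exact (Finset.prod_eq_zero (Finset.mem_univ i) (Set.indicator_of_notMem hi _)).symm

lemma pi_shift_withDensity {N : ℕ} (δ : Fin N → ℝ) :
    Measure.map (fun x i => x i - δ i) (Measure.pi fun _ : Fin N => gaussianReal 0 1)
      = (Measure.pi fun _ : Fin N => gaussianReal 0 1).withDensity
          (fun x => ∏ i, ENNReal.ofReal (Real.exp (-(δ i) * x i - (δ i)^2/2))) := by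
  have hmeas_sub : Measurable fun (x : Fin N → ℝ) i => x i - δ i :=
    measurable_pi_lambda _ fun i => (measurable_pi_apply i).sub measurable_const
  have hρi : ∀ i, Measurable fun y => ENNReal.ofReal (Real.exp (-(δ i) * y - (δ i)^2/2)) :=
    fun i => by fun_prop
  have key : ∀ i : Fin N, (gaussianReal 0 1).withDensity
      (fun y => ENNReal.ofReal (Real.exp (-(δ i) * y - (δ i)^2/2))) = gaussianReal (-(δ i)) 1 := by
    intro i
    have := gauss_withDensity (-(δ i))
    simpa only [neg_sq] using this
  have hA : Measure.map (fun x i => x i - δ i) (Measure.pi fun _ : Fin N => gaussianReal 0 1)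
      = Measure.pi fun i => gaussianReal (-(δ i)) 1 := by
    refine (Measure.pi_eq fun s hs => ?_).symm
    rw [Measure.map_apply hmeas_sub (MeasurableSet.univ_pi hs)]
    have hpre : (fun (x : Fin N → ℝ) i => x i - δ i) ⁻¹' (Set.pi Set.univ s)
        = Set.pi Set.univ (fun i => (fun a => a - δ i) ⁻¹' (s i)) := by
      ext x; simp [Set.mem_pi]
    rw [hpre, Measure.pi_pi]
    refine Finset.prod_congr rfl fun i _ => ?_
    have : (fun a : ℝ => a - δ i) = fun a : ℝ => a + (-(δ i)) := by funext a; ring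
    rw [this, ← Measure.map_apply (measurable_add_const _) (hs i),
      gaussianReal_map_add_const, zero_add]
  have hB : (Measure.pi fun _ : Fin N => gaussianReal 0 1).withDensity
        (fun x => ∏ i, ENNReal.ofReal (Real.exp (-(δ i) * x i - (δ i)^2/2)))
      = Measure.pi fun i => gaussianReal (-(δ i)) 1 := by
    refine (Measure.pi_eq fun s hs => ?_).symm
    rw [withDensity_apply _ (MeasurableSet.univ_pi hs),
      ← lintegral_indicator (MeasurableSet.univ_pi hs)]
    rw [lintegral_congr (fun x => indicator_pi_prod s
      (fun i y => ENNReal.ofReal (Real.exp (-(δ i) * y - (δ i)^2/2))) x)]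
    rw [lintegral_pi_prod _ _ (fun i => ((hρi i).indicator (hs i)))]
    refine Finset.prod_congr rfl fun i _ => ?_
    rw [lintegral_indicator (hs i), ← withDensity_apply _ (hs i), key i]
  rw [hA, hB]

lemma prod_ofReal_exp {N : ℕ} (a : Fin N → ℝ) :
    ∏ i, ENNReal.ofReal (Real.exp (a i)) = ENNReal.ofReal (Real.exp (∑ i, a i)) := by
  rw [Real.exp_sum, ENNReal.ofReal_prod_of_nonneg (fun i _ => (Real.exp_nonneg _))]

/-! ### Change of measure plus Hölder -/

lemma core {N : ℕ} (δ : Fin N → ℝ) {B : Set (Fin N → ℝ)} (hB : MeasurableSet B)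
    {c : ℝ} (hc : 0 < c) :
    (Measure.pi fun _ : Fin N => gaussianReal 0 1) B ^ (1+c)
        * ENNReal.ofReal (Real.exp (-((1+c)/c * (∑ i, (δ i)^2) / 2)))
      ≤ Measure.map (fun x i => x i - δ i) (Measure.pi fun _ : Fin N => gaussianReal 0 1) B := by
  set μN := Measure.pi fun _ : Fin N => gaussianReal 0 1 with hμN
  set p : ℝ := 1 + c with hp
  set q : ℝ := (1 + c) / c with hq
  have hp0 : (0:ℝ) < p := by positivity
  have hq0 : (0:ℝ) < q := by positivity
  have hc' : c ≠ 0 := ne_of_gt hc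
  have h1c : (1:ℝ) + c ≠ 0 := by positivity
  have hp' : p ≠ 0 := ne_of_gt hp0
  have hq' : q ≠ 0 := ne_of_gt hq0
  have hpq : p.HolderConjugate q := (Real.holderConjugate_iff_eq_conjExponent (by rw [hp]; linarith)).mpr (by rw [hp, hq]; congr 1; ring)
  set h : (Fin N → ℝ) → ℝ := fun x => ∑ i, (-(δ i) * x i - (δ i)^2/2) with hh
  have hhm : Measurable h := by
    apply Finset.measurable_sum
    intro i _
    exact ((measurable_pi_apply i).const_mul _).sub measurable_const
  have hI : Measure.map (fun x i => x i - δ i) μN B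
      = ∫⁻ x, B.indicator (fun x => ENNReal.ofReal (Real.exp (h x))) x ∂μN := by
    rw [pi_shift_withDensity δ, withDensity_apply _ hB, ← lintegral_indicator hB]
    congr 1
    funext x
    congr 1
    funext y
    rw [prod_ofReal_exp]
  set f : (Fin N → ℝ) → ℝ≥0∞ := B.indicator fun x => ENNReal.ofReal (Real.exp (h x / p))
    with hf
  set g : (Fin N → ℝ) → ℝ≥0∞ := fun x => ENNReal.ofReal (Real.exp (-(h x) / p)) with hg
  have hfm : Measurable f := ((measurable_coe_nnreal_ennreal.comp
    (Real.measurable_exp.comp (hhm.div_const p)).real_toNNReal).indicator hB)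
  have hgm : Measurable g := measurable_coe_nnreal_ennreal.comp
    (Real.measurable_exp.comp ((hhm.neg).div_const p)).real_toNNReal
  have hfg : ∫⁻ x, (f * g) x ∂μN = μN B := by
    have key : ∀ x, (f * g) x = B.indicator 1 x := by
      intro x
      simp only [Pi.mul_apply, hf, hg]
      by_cases hx : x ∈ B
      · rw [Set.indicator_of_mem hx, Set.indicator_of_mem hx,
          ← ENNReal.ofReal_mul (Real.exp_nonneg _), ← Real.exp_add, Pi.one_apply]
        rw [show h x / p + -h x / p = 0 by ring, Real.exp_zero, ENNReal.ofReal_one]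
      · rw [Set.indicator_of_notMem hx, Set.indicator_of_notMem hx, zero_mul]
    rw [lintegral_congr key, lintegral_indicator_one hB]
  have hfp : ∫⁻ x, f x ^ p ∂μN = Measure.map (fun x i => x i - δ i) μN B := by
    rw [hI]
    refine lintegral_congr fun x => ?_
    by_cases hx : x ∈ B
    · rw [hf, Set.indicator_of_mem hx, Set.indicator_of_mem hx,
        ENNReal.ofReal_rpow_of_pos (Real.exp_pos _), ← Real.exp_mul,
        div_mul_cancel₀ _ hp']
    · rw [hf, Set.indicator_of_notMem hx, Set.indicator_of_notMem hx,
        ENNReal.zero_rpow_of_pos hp0]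
  have hexp : ∀ x : Fin N → ℝ, -(h x)/p*q = ∑ i, ((δ i / c) * x i + (δ i)^2/(2*c)) := by
    intro x
    rw [hh, ← Finset.sum_neg_distrib, Finset.sum_div, Finset.sum_mul]
    refine Finset.sum_congr rfl fun i _ => ?_
    rw [hp, hq]
    field_simp
    ring
  have hgq : ∫⁻ x, g x ^ q ∂μN
      = ENNReal.ofReal (Real.exp ((∑ i, (δ i)^2) * (1/(2*c) + 1/(2*c^2)))) := by
    have key : ∀ x : Fin N → ℝ, g x ^ q
        = ∏ i, ENNReal.ofReal (Real.exp ((δ i / c) * x i + (δ i)^2/(2*c))) := by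
      intro x
      rw [hg, ENNReal.ofReal_rpow_of_pos (Real.exp_pos _), ← Real.exp_mul, prod_ofReal_exp,
        hexp x]
    rw [lintegral_congr key, hμN, lintegral_pi_prod (fun _ => gaussianReal 0 1)
      (fun i y => ENNReal.ofReal (Real.exp ((δ i / c) * y + (δ i)^2/(2*c))))
      (fun i => by fun_prop)]
    have key2 : ∀ i : Fin N,
        ∫⁻ y, ENNReal.ofReal (Real.exp ((δ i / c) * y + (δ i)^2/(2*c))) ∂(gaussianReal 0 1)
          = ENNReal.ofReal (Real.exp ((δ i)^2/(2*c) + (δ i / c)^2/2)) :=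
      fun i => lintegral_exp_gauss' (δ i / c) ((δ i)^2/(2*c))
    rw [Finset.prod_congr rfl fun i _ => key2 i, prod_ofReal_exp]
    have heq : (∑ i : Fin N, ((δ i)^2/(2*c) + (δ i/c)^2/2))
        = (∑ i : Fin N, (δ i)^2) * (1/(2*c) + 1/(2*c^2)) := by
      rw [Finset.sum_mul]
      exact Finset.sum_congr rfl fun i _ => by field_simp
    rw [heq]
  have holder := ENNReal.lintegral_mul_le_Lp_mul_Lq μN hpq hfm.aemeasurable hgm.aemeasurable
  rw [hfg, hfp, hgq] at holder
  set I := Measure.map (fun x i => x i - δ i) μN B with hIdef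
  set K : ℝ := (∑ i, (δ i)^2) * (1/(2*c) + 1/(2*c^2)) with hK
  have h2 : μN B ^ p ≤ I * ENNReal.ofReal (Real.exp (K / q * p)) := by
    calc μN B ^ p ≤ (I ^ (1/p) * ENNReal.ofReal (Real.exp K) ^ (1/q)) ^ p :=
          ENNReal.rpow_le_rpow holder (le_of_lt hp0)
      _ = I ^ (1/p*p) * (ENNReal.ofReal (Real.exp K) ^ (1/q)) ^ p := by
          rw [ENNReal.mul_rpow_of_nonneg _ _ (le_of_lt hp0), ← ENNReal.rpow_mul]
      _ = I * ENNReal.ofReal (Real.exp (K / q * p)) := by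
          rw [one_div_mul_cancel hp', ENNReal.rpow_one,
            ENNReal.ofReal_rpow_of_pos (Real.exp_pos _), ← Real.exp_mul,
            ENNReal.ofReal_rpow_of_pos (Real.exp_pos _), ← Real.exp_mul]
          congr 2
          ring
  have hKq : K / q * p = (1+c)/c * (∑ i, (δ i)^2) / 2 := by
    rw [hK, hp, hq]
    field_simp
    ring
  rw [hKq] at h2
  calc μN B ^ (1+c) * ENNReal.ofReal (Real.exp (-((1+c)/c * (∑ i, (δ i)^2) / 2)))
      ≤ (I * ENNReal.ofReal (Real.exp ((1+c)/c * (∑ i, (δ i)^2) / 2)))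
          * ENNReal.ofReal (Real.exp (-((1+c)/c * (∑ i, (δ i)^2) / 2))) := by
        exact mul_le_mul_left h2 _
    _ = I := by
        rw [mul_assoc, ← ENNReal.ofReal_mul (Real.exp_nonneg _), ← Real.exp_add]
        norm_num

/-! ### Law of the coordinate vector -/

lemma map_T {Ω : Type*} [MeasureSpace Ω] [IsProbabilityMeasure (ℙ : Measure Ω)]
    (ξ : ℕ → Ω → ℝ) (hmeas : ∀ n, Measurable (ξ n))
    (hgauss : ∀ n, Measure.map (ξ n) ℙ = gaussianReal 0 1)
    (hindep : iIndepFun ξ ℙ) (N : ℕ) :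
    Measure.map (fun ω (i : Fin N) => ξ ((i : ℕ)+1) ω) ℙ
      = Measure.pi (fun _ : Fin N => gaussianReal 0 1) := by
  classical
  have hT : Measurable (fun ω (i : Fin N) => ξ ((i : ℕ)+1) ω) :=
    measurable_pi_lambda _ fun i => hmeas _
  refine (Measure.pi_eq fun s hs => ?_).symm
  rw [Measure.map_apply hT (MeasurableSet.univ_pi hs)]
  set F : Finset ℕ := Finset.image (fun i : Fin N => (i : ℕ) + 1) Finset.univ with hF
  set sets : ℕ → Set ℝ := fun k =>
    if hk : 1 ≤ k ∧ k ≤ N then s ⟨k-1, by omega⟩ else Set.univ with hsets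
  have hsets_meas : ∀ k, MeasurableSet (sets k) := by
    intro k
    rw [hsets]
    by_cases hk : 1 ≤ k ∧ k ≤ N
    · simp only [dif_pos hk]; exact hs _
    · simp only [dif_neg hk]; exact MeasurableSet.univ
  have hsets_eq : ∀ i : Fin N, sets ((i : ℕ)+1) = s i := by
    intro i
    have hk : 1 ≤ (i : ℕ)+1 ∧ (i : ℕ)+1 ≤ N := ⟨by omega, by omega⟩
    rw [hsets]
    simp only [dif_pos hk, Nat.add_sub_cancel]
  have hpre : (fun ω (i : Fin N) => ξ ((i : ℕ)+1) ω) ⁻¹' (Set.pi Set.univ s)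
      = ⋂ k ∈ F, ξ k ⁻¹' (sets k) := by
    ext ω
    simp only [Set.mem_preimage, Set.mem_pi, Set.mem_univ, true_implies, Set.mem_iInter, hF,
      Finset.mem_image, Finset.mem_univ, true_and]
    constructor
    · rintro h k ⟨i, rfl⟩
      rw [hsets_eq i]
      exact h i
    · intro h i
      rw [← hsets_eq i]
      exact h _ ⟨i, rfl⟩
  rw [hpre, hindep.measure_inter_preimage_eq_mul F (fun k _ => hsets_meas k)]
  have hinj : Set.InjOn (fun i : Fin N => (i : ℕ) + 1) ↑(Finset.univ : Finset (Fin N)) := by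
    intro a _ b _ hab
    simp only at hab
    exact Fin.ext (by omega)
  rw [hF, Finset.prod_image hinj]
  refine Finset.prod_congr rfl fun i _ => ?_
  rw [← Measure.map_apply (hmeas _) (hsets_meas _), hgauss, hsets_eq i]

/-! ### Representation of the integrated walk -/

lemma S_rep {Ω : Type*} (ξ : ℕ → Ω → ℝ) (S : ℕ → ℕ → Ω → ℝ)
    (hS1 : ∀ (n : ℕ) (ω : Ω), S 1 n ω = ∑ i ∈ Finset.Icc 1 n, ξ i ω)
    (hSrec : ∀ (M n : ℕ) (ω : Ω), S (M + 2) n ω = ∑ k ∈ Finset.Icc 1 n, S (M + 1) k ω) :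
    ∀ M n ω, S (M+1) n ω = ∑ k ∈ Finset.Icc 1 n, (W M n k : ℝ) * ξ k ω := by
  intro M
  induction M with
  | zero =>
    intro n ω
    rw [hS1]
    refine Finset.sum_congr rfl fun k hk => ?_
    simp [W, hk]
  | succ M ih =>
    intro n ω
    rw [hSrec M n ω]
    have step1 : ∀ j ∈ Finset.Icc 1 n,
        S (M+1) j ω = ∑ k ∈ Finset.Icc 1 n, (W M j k : ℝ) * ξ k ω := by
      intro j hj
      rw [ih j ω]
      refine Finset.sum_subset ?_ ?_
      · intro k hk; simp only [Finset.mem_Icc] at *; omega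
      · intro k _ hk
        rw [W_eq_zero M j k hk]
        simp
    rw [Finset.sum_congr rfl step1, Finset.sum_comm]
    refine Finset.sum_congr rfl fun k _ => ?_
    rw [← Finset.sum_mul]
    congr 1
    rw [show W (M+1) n k = ∑ j ∈ Finset.Icc 1 n, W M j k from rfl]
    push_cast
    rfl

/-! ### Drift estimates -/

lemma drift_ge (m : ℕ) (hm : 0 < m) (ε : ℝ) (hε : 0 < ε) (n : ℕ) (hn : 1 ≤ n) :
    ε * (n : ℝ) ^ ((m : ℝ) - 1/2)
      ≤ ∑ k ∈ Finset.Icc 1 n, (W (m-1) n k : ℝ) * ((m.factorial : ℝ) * ε / Real.sqrt k) := by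
  have hn0 : (0:ℝ) < (n:ℝ) := by positivity
  have hsn : (0:ℝ) < Real.sqrt n := Real.sqrt_pos.mpr hn0
  have step1 : ∀ k ∈ Finset.Icc 1 n,
      (W (m-1) n k : ℝ) * ((m.factorial : ℝ) * ε / Real.sqrt n)
        ≤ (W (m-1) n k : ℝ) * ((m.factorial : ℝ) * ε / Real.sqrt k) := by
    intro k hk
    simp only [Finset.mem_Icc] at hk
    have hkpos : (0:ℝ) < (k:ℝ) := by exact_mod_cast Nat.lt_of_lt_of_le Nat.zero_lt_one hk.1
    have hk0 : (0:ℝ) < Real.sqrt k := Real.sqrt_pos.mpr hkpos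
    refine mul_le_mul_of_nonneg_left ?_ (Nat.cast_nonneg _)
    refine div_le_div_of_nonneg_left (by positivity) hk0 ?_
    exact Real.sqrt_le_sqrt (by exact_mod_cast hk.2)
  have step2 : (n:ℝ)^m / (m.factorial : ℝ) ≤ (∑ k ∈ Finset.Icc 1 n, (W (m-1) n k : ℝ)) := by
    have h := Wsum_ge (m-1) n
    rw [Nat.sub_add_cancel hm] at h
    have h' : ((n^m : ℕ) : ℝ) ≤ ((m.factorial * ∑ k ∈ Finset.Icc 1 n, W (m-1) n k : ℕ) : ℝ) := by
      exact_mod_cast h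
    push_cast at h'
    rw [div_le_iff₀ (by positivity : (0:ℝ) < (m.factorial : ℝ))]
    linarith
  have hrw : ε * (n : ℝ) ^ ((m : ℝ) - 1/2)
      = ((n:ℝ)^m / (m.factorial : ℝ)) * ((m.factorial : ℝ) * ε / Real.sqrt n) := by
    rw [Real.rpow_sub hn0, Real.rpow_natCast, ← Real.sqrt_eq_rpow]
    field_simp
  calc ε * (n : ℝ) ^ ((m : ℝ) - 1/2)
      = ((n:ℝ)^m / (m.factorial : ℝ)) * ((m.factorial : ℝ) * ε / Real.sqrt n) := hrw
    _ ≤ (∑ k ∈ Finset.Icc 1 n, (W (m-1) n k : ℝ)) * ((m.factorial : ℝ) * ε / Real.sqrt n) := by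
        refine mul_le_mul_of_nonneg_right step2 (by positivity)
    _ = ∑ k ∈ Finset.Icc 1 n, (W (m-1) n k : ℝ) * ((m.factorial : ℝ) * ε / Real.sqrt n) := by
        rw [Finset.sum_mul]
    _ ≤ ∑ k ∈ Finset.Icc 1 n, (W (m-1) n k : ℝ) * ((m.factorial : ℝ) * ε / Real.sqrt k) :=
        Finset.sum_le_sum step1

lemma sumsq_le (Cc ε : ℝ) (N : ℕ) :
    ∑ i : Fin N, (Cc * ε / Real.sqrt ((i:ℕ)+1))^2 ≤ (Cc*ε)^2 * (1 + Real.log N) := by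
  have h1 : ∀ i : Fin N, (Cc * ε / Real.sqrt ((i:ℕ)+1))^2 = (Cc*ε)^2 * (((i:ℕ)+1:ℝ))⁻¹ := by
    intro i
    rw [div_pow, Real.sq_sqrt (by positivity)]
    ring
  rw [Finset.sum_congr rfl fun i _ => h1 i, ← Finset.mul_sum]
  have h2 : ∑ i : Fin N, (((i:ℕ)+1:ℝ))⁻¹ = ((harmonic N : ℚ) : ℝ) := by
    rw [harmonic]
    push_cast
    exact Fin.sum_univ_eq_sum_range (fun x => ((x:ℝ)+1)⁻¹) N
  rw [h2]
  exact mul_le_mul_of_nonneg_left (harmonic_le_one_add_log N) (by positivity)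

/-! ### Gaussian tail function -/

noncomputable def Qg (t : ℝ) : ℝ := ((gaussianReal 0 1) (Set.Ici t)).toReal

lemma gauss_le_volume (s : Set ℝ) (hs : MeasurableSet s) :
    (gaussianReal 0 1) s ≤ volume s := by
  rw [gaussianReal_of_var_ne_zero 0 one_ne_zero, withDensity_apply _ hs]
  calc ∫⁻ x in s, gaussianPDF 0 1 x ∂volume ≤ ∫⁻ _ in s, 1 ∂volume := by
        refine setLIntegral_mono measurable_const fun x _ => ?_
        rw [gaussianPDF, show (1:ℝ≥0∞) = ENNReal.ofReal 1 by simp]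
        refine ENNReal.ofReal_le_ofReal ?_
        rw [gaussianPDFReal]
        have h2 : (1:ℝ) ≤ Real.sqrt (2 * π * (1:ℝ≥0)) := by
          rw [show ((1:ℝ≥0):ℝ) = 1 by simp, mul_one]
          rw [show (1:ℝ) = Real.sqrt 1 by simp]
          exact Real.sqrt_le_sqrt (by nlinarith [Real.pi_gt_three])
        have h3 : (Real.sqrt (2 * π * (1:ℝ≥0)))⁻¹ ≤ 1 := by
          rw [inv_le_one_iff₀]; right; exact h2
        have h4 : Real.exp (-(x - 0)^2 / (2 * (1:ℝ≥0))) ≤ 1 := by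
          rw [Real.exp_le_one_iff]
          have : (0:ℝ) ≤ (x - 0)^2 := sq_nonneg _
          have h5 : ((1:ℝ≥0):ℝ) = 1 := by simp
          rw [h5]
          nlinarith
        calc (Real.sqrt (2 * π * (1:ℝ≥0)))⁻¹ * Real.exp (-(x - 0)^2 / (2 * (1:ℝ≥0)))
            ≤ 1 * 1 := by
              refine mul_le_mul h3 h4 (Real.exp_nonneg _) zero_le_one
          _ = 1 := by norm_num
    _ = volume s := by rw [setLIntegral_one]

lemma gauss_pos (s : Set ℝ) (hs : MeasurableSet s) (hvol : volume s ≠ 0) :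
    0 < (gaussianReal 0 1) s := by
  rw [pos_iff_ne_zero]
  intro hcon
  rw [gaussianReal_of_var_ne_zero 0 one_ne_zero, withDensity_apply _ hs,
    lintegral_eq_zero_iff (measurable_gaussianPDF 0 1)] at hcon
  have h1 : (volume.restrict s) {x | gaussianPDF 0 1 x ≠ 0} = 0 := by
    simpa [Filter.EventuallyEq, ae_iff] using hcon
  have h2 : {x : ℝ | gaussianPDF 0 1 x ≠ 0} = Set.univ := by
    ext x
    simp only [Set.mem_setOf_eq, Set.mem_univ, iff_true]
    exact ne_of_gt (gaussianPDF_pos 0 one_ne_zero x)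
  rw [h2, Measure.restrict_apply_univ] at h1
  exact hvol h1

lemma gauss_ne_top (s : Set ℝ) : (gaussianReal 0 1) s ≠ ⊤ :=
  ne_of_lt (lt_of_le_of_lt prob_le_one ENNReal.one_lt_top)

lemma Qg_pos (t : ℝ) : 0 < Qg t := by
  rw [Qg, ENNReal.toReal_pos_iff]
  refine ⟨?_, lt_of_le_of_lt prob_le_one ENNReal.one_lt_top⟩
  refine gauss_pos _ measurableSet_Ici ?_
  rw [Real.volume_Ici]
  simp

lemma Qg_lt_one (t : ℝ) : Qg t < 1 := by
  have hIio : 0 < (gaussianReal 0 1) (Set.Iio t) := by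
    refine gauss_pos _ measurableSet_Iio ?_
    rw [Real.volume_Iio]
    simp
  have hadd : (gaussianReal 0 1) (Set.Ici t) + (gaussianReal 0 1) (Set.Iio t) = 1 := by
    have := measure_add_measure_compl (μ := gaussianReal 0 1) (measurableSet_Ici (a := t))
    rwa [Set.compl_Ici, measure_univ] at this
  have hlt : (gaussianReal 0 1) (Set.Ici t) < 1 := by
    calc (gaussianReal 0 1) (Set.Ici t)
        < (gaussianReal 0 1) (Set.Ici t) + (gaussianReal 0 1) (Set.Iio t) :=
          ENNReal.lt_add_right (gauss_ne_top _) (ne_of_gt hIio)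
      _ = 1 := hadd
  rw [Qg, show (1:ℝ) = (1:ℝ≥0∞).toReal by simp]
  exact (ENNReal.toReal_lt_toReal (gauss_ne_top _) ENNReal.one_ne_top).mpr hlt

lemma Qg_antitone {s t : ℝ} (hst : s ≤ t) : Qg t ≤ Qg s := by
  rw [Qg, Qg]
  exact ENNReal.toReal_mono (gauss_ne_top _) (measure_mono (Set.Ici_subset_Ici.mpr hst))

lemma Qg_modulus (t : ℝ) {ε : ℝ} (hε : 0 < ε) : Qg t - ε ≤ Qg (t + ε) := by
  have hsplit : Set.Ici t = Set.Ico t (t+ε) ∪ Set.Ici (t+ε) := by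
    rw [Set.Ico_union_Ici_eq_Ici (by linarith)]
  have hmeas : (gaussianReal 0 1) (Set.Ici t)
      ≤ (gaussianReal 0 1) (Set.Ico t (t+ε)) + (gaussianReal 0 1) (Set.Ici (t+ε)) := by
    rw [hsplit]
    exact measure_union_le _ _
  have hIco : (gaussianReal 0 1) (Set.Ico t (t+ε)) ≤ ENNReal.ofReal ε := by
    refine le_trans (gauss_le_volume _ measurableSet_Ico) ?_
    rw [Real.volume_Ico]
    simp
  rw [Qg, Qg, sub_le_iff_le_add]
  calc ((gaussianReal 0 1) (Set.Ici t)).toReal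
      ≤ ((gaussianReal 0 1) (Set.Ico t (t+ε)) + (gaussianReal 0 1) (Set.Ici (t+ε))).toReal := by
        refine ENNReal.toReal_mono ?_ hmeas
        exact ENNReal.add_ne_top.mpr ⟨gauss_ne_top _, gauss_ne_top _⟩
    _ = ((gaussianReal 0 1) (Set.Ico t (t+ε))).toReal
          + ((gaussianReal 0 1) (Set.Ici (t+ε))).toReal :=
        ENNReal.toReal_add (gauss_ne_top _) (gauss_ne_top _)
    _ ≤ ε + ((gaussianReal 0 1) (Set.Ici (t+ε))).toReal := by
        have := ENNReal.toReal_mono (by simp) hIco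
        rw [ENNReal.toReal_ofReal (le_of_lt hε)] at this
        linarith
    _ = ((gaussianReal 0 1) (Set.Ici (t+ε))).toReal + ε := by ring

/-! ### Coordinate extension helpers -/

def xe {N : ℕ} (x : Fin N → ℝ) (k : ℕ) : ℝ :=
  if hk : 1 ≤ k ∧ k ≤ N then x ⟨k-1, by omega⟩ else 0

lemma xe_meas {N : ℕ} (k : ℕ) : Measurable (fun x : Fin N → ℝ => xe x k) := by
  unfold xe
  by_cases hk : 1 ≤ k ∧ k ≤ N
  · simp only [dif_pos hk]; exact measurable_pi_apply _
  · simp only [dif_neg hk]; exact measurable_const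

lemma xe_T {Ω : Type*} (ξ : ℕ → Ω → ℝ) {N : ℕ} (ω : Ω) (k : ℕ) (hk : 1 ≤ k ∧ k ≤ N) :
    xe (fun i : Fin N => ξ ((i:ℕ)+1) ω) k = ξ k ω := by
  unfold xe
  rw [dif_pos hk]
  show ξ ((k-1)+1) ω = ξ k ω
  congr 1
  omega

lemma xe_sub {N : ℕ} (x y : Fin N → ℝ) (k : ℕ) :
    xe (fun i => x i - y i) k = xe x k - xe y k := by
  unfold xe
  by_cases hk : 1 ≤ k ∧ k ≤ N
  · simp only [dif_pos hk]
  · simp only [dif_neg hk]; ring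

lemma xe_delta {N : ℕ} (a : ℝ) (k : ℕ) (hk : 1 ≤ k ∧ k ≤ N) :
    xe (fun i : Fin N => a / Real.sqrt ((i:ℕ)+1)) k = a / Real.sqrt k := by
  unfold xe
  rw [dif_pos hk]
  have hnat : ((k-1 : ℕ) : ℝ) + 1 = (k : ℝ) := by
    have h1 := hk.1
    have : ((k-1)+1 : ℕ) = k := by omega
    calc ((k-1 : ℕ) : ℝ) + 1 = (((k-1)+1 : ℕ) : ℝ) := by push_cast; ring
      _ = (k : ℝ) := by rw [this]
  show a / Real.sqrt (((k-1 : ℕ) : ℝ) + 1) = a / Real.sqrt k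
  rw [hnat]

lemma measurable_event {N : ℕ} (L : ℕ → (Fin N → ℝ) → ℝ) (hL : ∀ n, Measurable (L n))
    (g : ℕ → ℝ) :
    MeasurableSet {x : Fin N → ℝ | ∀ n, 1 ≤ n → n ≤ N → g n ≤ L n x} := by
  rw [show {x : Fin N → ℝ | ∀ n, 1 ≤ n → n ≤ N → g n ≤ L n x}
      = ⋂ n : ℕ, {x | 1 ≤ n → n ≤ N → g n ≤ L n x} from Set.setOf_forall _]
  refine MeasurableSet.iInter fun n => ?_
  by_cases h1 : 1 ≤ n ∧ n ≤ N
  · have he : {x : Fin N → ℝ | 1 ≤ n → n ≤ N → g n ≤ L n x} = {x | g n ≤ L n x} := by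
      ext x; simp [h1.1, h1.2]
    rw [he]
    exact measurableSet_le measurable_const (hL n)
  · have he : {x : Fin N → ℝ | 1 ≤ n → n ≤ N → g n ≤ L n x} = Set.univ := by
      ext x
      simp only [Set.mem_setOf_eq, Set.mem_univ, iff_true]
      intro ha hb
      exact absurd ⟨ha, hb⟩ h1
    rw [he]
    exact MeasurableSet.univ

/-! ### Main bound for N ≥ 2 -/

lemma main_ge_two {Ω : Type*} [MeasureSpace Ω] [IsProbabilityMeasure (ℙ : Measure Ω)]
    (m : ℕ) (hm : 0 < m)
    (ξ : ℕ → Ω → ℝ) (hmeas : ∀ n, Measurable (ξ n))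
    (hgauss : ∀ n, Measure.map (ξ n) ℙ = gaussianReal 0 1)
    (hindep : iIndepFun ξ ℙ)
    (S : ℕ → ℕ → Ω → ℝ)
    (hS1 : ∀ (n : ℕ) (ω : Ω), S 1 n ω = ∑ i ∈ Finset.Icc 1 n, ξ i ω)
    (hSrec : ∀ (M n : ℕ) (ω : Ω), S (M + 2) n ω = ∑ k ∈ Finset.Icc 1 n, S (M + 1) k ω)
    (f : ℕ → ℝ) (ε : ℝ) (hε : 0 < ε) (c : ℝ) (hc : 0 < c)
    (hcge : 3 * ((m.factorial : ℝ) * ε)^2 * (1+c) ≤ 2 * c^2)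
    (N : ℕ) (hN : 2 ≤ N) :
    (ℙ {ω | ∀ n : ℕ, 1 ≤ n → n ≤ N →
        f n + ε * (n : ℝ) ^ ((m : ℝ) - 1 / 2) ≤ S m n ω}).toReal
      ≥ (ℙ {ω | ∀ n : ℕ, 1 ≤ n → n ≤ N → f n ≤ S m n ω}).toReal ^ (1 + c)
          * (N : ℝ) ^ (-c) := by
  classical
  set C : ℝ := (m.factorial : ℝ) with hCdef
  have hC1 : (1:ℝ) ≤ C := Nat.one_le_cast.mpr m.factorial_pos
  have hm1 : m - 1 + 1 = m := Nat.succ_pred_eq_of_pos hm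
  set μN := Measure.pi fun _ : Fin N => gaussianReal 0 1 with hμN
  set T : Ω → Fin N → ℝ := fun ω i => ξ ((i:ℕ)+1) ω with hTdef
  have hT : Measurable T := measurable_pi_lambda _ fun i => hmeas _
  set L : ℕ → (Fin N → ℝ) → ℝ :=
    fun n x => ∑ k ∈ Finset.Icc 1 n, (W (m-1) n k : ℝ) * xe x k with hLdef
  have hL : ∀ n, Measurable (L n) :=
    fun n => Finset.measurable_sum _ fun k _ => (xe_meas k).const_mul _
  have hrep : ∀ n (ω : Ω), S m n ω = ∑ k ∈ Finset.Icc 1 n, (W (m-1) n k : ℝ) * ξ k ω := by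
    intro n ω
    have := S_rep ξ S hS1 hSrec (m-1) n ω
    rwa [hm1] at this
  have hSL : ∀ n, n ≤ N → ∀ ω, S m n ω = L n (T ω) := by
    intro n hn ω
    rw [hrep, hLdef]
    refine Finset.sum_congr rfl fun k hk => ?_
    simp only [Finset.mem_Icc] at hk
    rw [hTdef, xe_T ξ ω k ⟨hk.1, le_trans hk.2 hn⟩]
  set B0 : Set (Fin N → ℝ) := {x | ∀ n, 1 ≤ n → n ≤ N → f n ≤ L n x} with hB0def
  set Bε : Set (Fin N → ℝ) :=
    {x | ∀ n, 1 ≤ n → n ≤ N → f n + ε * (n : ℝ) ^ ((m : ℝ) - 1/2) ≤ L n x} with hBεdef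
  have hB0 : MeasurableSet B0 := measurable_event L hL f
  have hBε : MeasurableSet Bε :=
    measurable_event L hL (fun n => f n + ε * (n : ℝ) ^ ((m : ℝ) - 1/2))
  have hA0 : ℙ {ω | ∀ n : ℕ, 1 ≤ n → n ≤ N → f n ≤ S m n ω} = μN B0 := by
    have hseteq : {ω | ∀ n : ℕ, 1 ≤ n → n ≤ N → f n ≤ S m n ω} = T ⁻¹' B0 := by
      ext ω
      simp only [Set.mem_setOf_eq, Set.mem_preimage, hB0def]
      constructor
      · intro h n h1 h2; rw [← hSL n h2 ω]; exact h n h1 h2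
      · intro h n h1 h2; rw [hSL n h2 ω]; exact h n h1 h2
    rw [hseteq, ← Measure.map_apply hT hB0, hTdef, map_T ξ hmeas hgauss hindep N]
  have hAε : ℙ {ω | ∀ n : ℕ, 1 ≤ n → n ≤ N →
      f n + ε * (n : ℝ) ^ ((m : ℝ) - 1/2) ≤ S m n ω} = μN Bε := by
    have hseteq : {ω | ∀ n : ℕ, 1 ≤ n → n ≤ N →
        f n + ε * (n : ℝ) ^ ((m : ℝ) - 1/2) ≤ S m n ω} = T ⁻¹' Bε := by
      ext ω
      simp only [Set.mem_setOf_eq, Set.mem_preimage, hBεdef]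
      constructor
      · intro h n h1 h2; rw [← hSL n h2 ω]; exact h n h1 h2
      · intro h n h1 h2; rw [hSL n h2 ω]; exact h n h1 h2
    rw [hseteq, ← Measure.map_apply hT hBε, hTdef, map_T ξ hmeas hgauss hindep N]
  set δ : Fin N → ℝ := fun i => C * ε / Real.sqrt ((i:ℕ)+1) with hδdef
  have hmeas_sub : Measurable fun (x : Fin N → ℝ) i => x i - δ i :=
    measurable_pi_lambda _ fun i => (measurable_pi_apply i).sub measurable_const
  have hsub : (fun x (i : Fin N) => x i - δ i) ⁻¹' B0 ⊆ Bε := by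
    intro x hx
    simp only [Set.mem_preimage, hB0def, Set.mem_setOf_eq] at hx
    intro n h1 h2
    have hx' := hx n h1 h2
    have hlin : L n (fun i => x i - δ i)
        = L n x - ∑ k ∈ Finset.Icc 1 n, (W (m-1) n k : ℝ) * (C * ε / Real.sqrt k) := by
      rw [hLdef, ← Finset.sum_sub_distrib]
      refine Finset.sum_congr rfl fun k hk => ?_
      simp only [Finset.mem_Icc] at hk
      rw [hδdef, xe_sub, xe_delta (C * ε) k ⟨hk.1, le_trans hk.2 h2⟩]
      ring
    have hdrift := drift_ge m hm ε hε n h1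
    rw [hlin] at hx'
    have : ε * (n : ℝ) ^ ((m : ℝ) - 1/2)
        ≤ ∑ k ∈ Finset.Icc 1 n, (W (m-1) n k : ℝ) * (C * ε / Real.sqrt k) := hdrift
    linarith
  have hcore := core δ hB0 hc
  have hchain : μN B0 ^ (1+c)
      * ENNReal.ofReal (Real.exp (-((1+c)/c * (∑ i, (δ i)^2) / 2))) ≤ μN Bε := by
    refine le_trans hcore ?_
    rw [Measure.map_apply hmeas_sub hB0]
    exact measure_mono hsub
  have hSig : ∑ i, (δ i)^2 ≤ (C*ε)^2 * (1 + Real.log N) := sumsq_le C ε N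
  have hNpos : (0:ℝ) < (N:ℝ) := by positivity
  have hN2 : (2:ℝ) ≤ (N:ℝ) := by exact_mod_cast hN
  have hlog2 : Real.log 2 ≤ Real.log N := Real.log_le_log (by norm_num) hN2
  have hlogN : 1 ≤ 2 * Real.log N := by nlinarith [Real.log_two_gt_d9]
  have hlogpos : 0 < Real.log N := by nlinarith
  have hSignn : 0 ≤ ∑ i, (δ i)^2 := Finset.sum_nonneg fun i _ => sq_nonneg _
  have hexp_le : (N:ℝ)^(-c) ≤ Real.exp (-((1+c)/c * (∑ i, (δ i)^2) / 2)) := by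
    rw [Real.rpow_def_of_pos hNpos]
    refine Real.exp_le_exp.mpr ?_
    have hstep : (1+c)/c * (∑ i, (δ i)^2) / 2 ≤ c * Real.log N := by
      have hb1 : (∑ i, (δ i)^2) ≤ 3*(C*ε)^2 * Real.log N := by
        refine le_trans hSig ?_
        nlinarith [sq_nonneg (C*ε)]
      have hq0 : (0:ℝ) < (1+c)/c := by positivity
      calc (1+c)/c * (∑ i, (δ i)^2) / 2 ≤ (1+c)/c * (3*(C*ε)^2*Real.log N)/2 := by
            have := mul_le_mul_of_nonneg_left hb1 (le_of_lt hq0)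
            linarith
        _ ≤ c * Real.log N := by
            rw [div_mul_eq_mul_div, div_div, div_le_iff₀ (by positivity : (0:ℝ) < c*2)]
            nlinarith [mul_le_mul_of_nonneg_right hcge (le_of_lt hlogpos)]
    linarith
  have hchain2 : μN B0 ^ (1+c) * ENNReal.ofReal ((N:ℝ)^(-c)) ≤ μN Bε :=
    le_trans (mul_le_mul_right (ENNReal.ofReal_le_ofReal hexp_le) _) hchain
  rw [ge_iff_le, hA0, hAε]
  have hfin : μN Bε ≠ ⊤ := measure_ne_top _ _
  calc (μN B0).toReal ^ (1+c) * (N:ℝ)^(-c)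
      = ((μN B0 ^ (1+c)) * ENNReal.ofReal ((N:ℝ)^(-c))).toReal := by
        rw [ENNReal.toReal_mul, ENNReal.toReal_rpow,
          ENNReal.toReal_ofReal (Real.rpow_nonneg (le_of_lt hNpos) _)]
    _ ≤ (μN Bε).toReal := ENNReal.toReal_mono hfin hchain2

end Stmt13Aux

open Stmt13Aux in
/-- Small-drift comparison for the integrated Gaussian random walk of order `m`:
for every `ε > 0` there is `c_ε > 0`, with `c_ε → 0` as `ε → 0`, such that
`P(S_n^{(m)} ≥ f_n + ε n^{m-1/2} ∀ n ≤ N) ≥ P(S_n^{(m)} ≥ f_n ∀ n ≤ N)^{1+c_ε} N^{-c_ε}`. -/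
theorem stmt13 {Ω : Type*} [MeasureSpace Ω] [IsProbabilityMeasure (ℙ : Measure Ω)]
    (m : ℕ) (hm : 0 < m)
    (ξ : ℕ → Ω → ℝ) (hmeas : ∀ n, Measurable (ξ n))
    (hgauss : ∀ n, Measure.map (ξ n) ℙ = gaussianReal 0 1)
    (hindep : iIndepFun ξ ℙ)
    (S : ℕ → ℕ → Ω → ℝ)
    (hS1 : ∀ (n : ℕ) (ω : Ω), S 1 n ω = ∑ i ∈ Finset.Icc 1 n, ξ i ω)
    (hSrec : ∀ (M n : ℕ) (ω : Ω), S (M + 2) n ω = ∑ k ∈ Finset.Icc 1 n, S (M + 1) k ω)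
    (f : ℕ → ℝ) :
    ∃ cfun : ℝ → ℝ, (∀ ε > (0 : ℝ), 0 < cfun ε) ∧
      Tendsto cfun (nhdsWithin 0 (Set.Ioi 0)) (nhds 0) ∧
      ∀ ε > (0 : ℝ), ∀ N : ℕ,
        (ℙ {ω | ∀ n : ℕ, 1 ≤ n → n ≤ N →
            f n + ε * (n : ℝ) ^ ((m : ℝ) - 1 / 2) ≤ S m n ω}).toReal ≥
          (ℙ {ω | ∀ n : ℕ, 1 ≤ n → n ≤ N → f n ≤ S m n ω}).toReal ^ (1 + cfun ε) *
            (N : ℝ) ^ (-(cfun ε)) := by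
  classical
  have hmfac : (1:ℝ) ≤ (m.factorial : ℝ) := Nat.one_le_cast.mpr m.factorial_pos
  set C : ℝ := (m.factorial : ℝ) with hCdef
  have hC0 : (0:ℝ) < C := lt_of_lt_of_le one_pos hmfac
  have hm1 : m - 1 + 1 = m := Nat.succ_pred_eq_of_pos hm
  have hQ0 : 0 < Qg (f 1) := Qg_pos _
  have hQ1 : Qg (f 1) < 1 := Qg_lt_one _
  have hlogneg : Real.log (Qg (f 1)) < 0 := Real.log_neg hQ0 hQ1
  set c1 : ℝ → ℝ := fun ε => 2*C*ε*(1+2*C*ε) with hc1def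
  set r : ℝ → ℝ := fun ε => Real.log (Qg (f 1 + ε)) / Real.log (Qg (f 1)) with hrdef
  have hr_ge : ∀ ε : ℝ, 0 < ε → 1 ≤ r ε := by
    intro ε hε
    rw [hrdef]
    rw [le_div_iff_of_neg hlogneg, one_mul]
    exact Real.log_le_log (Qg_pos _) (Qg_antitone (by linarith))
  have hc1pos : ∀ ε : ℝ, 0 < ε → 0 < c1 ε := by
    intro ε hε
    have h2 : (0:ℝ) < 2*C*ε := by positivity
    show (0:ℝ) < 2*C*ε*(1+2*C*ε)
    nlinarith
  refine ⟨fun ε => c1 ε + (r ε - 1), ?_, ?_, ?_⟩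
  · intro ε hε
    have h1 := hr_ge ε hε
    have h2 := hc1pos ε hε
    simp only []
    linarith
  · have ht1 : Tendsto c1 (nhdsWithin 0 (Set.Ioi 0)) (nhds 0) := by
      have hcont : Continuous c1 := by
        rw [hc1def]
        continuity
      have h := hcont.tendsto 0
      rw [show c1 0 = 0 by rw [hc1def]; norm_num] at h
      exact h.mono_left nhdsWithin_le_nhds
    have ht2 : Tendsto (fun ε => Qg (f 1 + ε)) (nhdsWithin 0 (Set.Ioi 0))
        (nhds (Qg (f 1))) := by
      have hlow : Tendsto (fun ε : ℝ => Qg (f 1) - ε) (nhdsWithin 0 (Set.Ioi 0))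
          (nhds (Qg (f 1))) := by
        have h : Tendsto (fun ε : ℝ => Qg (f 1) - ε) (nhds 0) (nhds (Qg (f 1) - 0)) :=
          (continuous_const.sub continuous_id).tendsto 0
        rw [sub_zero] at h
        exact h.mono_left nhdsWithin_le_nhds
      refine tendsto_of_tendsto_of_tendsto_of_le_of_le' hlow tendsto_const_nhds ?_ ?_
      · exact eventually_nhdsWithin_of_forall (fun ε hε => Qg_modulus (f 1) hε)
      · refine eventually_nhdsWithin_of_forall (fun ε hε => ?_)
        have hε0 : (0:ℝ) < ε := hε
        exact Qg_antitone (by linarith)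
    have ht3 : Tendsto r (nhdsWithin 0 (Set.Ioi 0)) (nhds 1) := by
      have hlog : Tendsto (fun ε => Real.log (Qg (f 1 + ε))) (nhdsWithin 0 (Set.Ioi 0))
          (nhds (Real.log (Qg (f 1)))) :=
        ((Real.continuousAt_log (ne_of_gt hQ0)).tendsto).comp ht2
      have h := hlog.div_const (Real.log (Qg (f 1)))
      rw [div_self (ne_of_lt hlogneg)] at h
      exact h
    have h := ht1.add (ht3.sub_const 1)
    simpa using h
  · intro ε hε N
    set c : ℝ := c1 ε + (r ε - 1) with hcdef
    have hrge := hr_ge ε hε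
    have hc1p := hc1pos ε hε
    have hc : 0 < c := by rw [hcdef]; linarith
    rcases Nat.lt_or_ge N 2 with hN | hN
    · interval_cases N
      · -- N = 0
        simp only [Nat.cast_zero]
        rw [Real.zero_rpow (neg_ne_zero.mpr (ne_of_gt hc)), mul_zero]
        exact ENNReal.toReal_nonneg
      · -- N = 1
        have hS1' : ∀ ω : Ω, S m 1 ω = ξ 1 ω := by
          intro ω
          have h := S_rep ξ S hS1 hSrec (m-1) 1 ω
          rw [hm1] at h
          rw [h, Finset.Icc_self, Finset.sum_singleton, W_one, Nat.cast_one, one_mul]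
        have hev : ∀ (g : ℕ → ℝ), {ω : Ω | ∀ n : ℕ, 1 ≤ n → n ≤ 1 → g n ≤ S m n ω}
            = ξ 1 ⁻¹' (Set.Ici (g 1)) := by
          intro g
          ext ω
          simp only [Set.mem_setOf_eq, Set.mem_preimage, Set.mem_Ici]
          constructor
          · intro h
            have := h 1 le_rfl le_rfl
            rwa [hS1' ω] at this
          · intro h n h1 h2
            have hn1 : n = 1 := le_antisymm h2 h1
            subst hn1
            rw [hS1' ω]
            exact h
        have hmeasP : ∀ t : ℝ, (ℙ (ξ 1 ⁻¹' (Set.Ici t))).toReal = Qg t := by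
          intro t
          rw [← Measure.map_apply (hmeas 1) measurableSet_Ici, hgauss 1, Qg]
        have hev0 : {ω : Ω | ∀ n : ℕ, 1 ≤ n → n ≤ 1 → f n ≤ S m n ω}
            = ξ 1 ⁻¹' (Set.Ici (f 1)) := hev f
        have hevε : {ω : Ω | ∀ n : ℕ, 1 ≤ n → n ≤ 1 →
            f n + ε * (n : ℝ) ^ ((m : ℝ) - 1 / 2) ≤ S m n ω}
            = ξ 1 ⁻¹' (Set.Ici (f 1 + ε)) := by
          have h := hev (fun n => f n + ε * (n : ℝ) ^ ((m : ℝ) - 1 / 2))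
          simp only [Nat.cast_one, Real.one_rpow, mul_one] at h
          exact h
        rw [hev0, hevε, hmeasP, hmeasP, Nat.cast_one,
          Real.one_rpow, mul_one, ge_iff_le]
        have h1 : Real.log (Qg (f 1 + ε)) / Real.log (Qg (f 1)) ≤ 1 + c := by
          rw [hcdef, hrdef]
          linarith
        have h2 : (1+c) * Real.log (Qg (f 1)) ≤ Real.log (Qg (f 1 + ε)) := by
          have h3 := mul_le_mul_of_nonpos_right h1 (le_of_lt hlogneg)
          rwa [div_mul_cancel₀ _ (ne_of_lt hlogneg)] at h3
        calc Qg (f 1) ^ (1+c) = Real.exp (Real.log (Qg (f 1)) * (1+c)) := by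
              rw [Real.rpow_def_of_pos hQ0]
          _ ≤ Real.exp (Real.log (Qg (f 1 + ε))) := Real.exp_le_exp.mpr (by linarith)
          _ = Qg (f 1 + ε) := Real.exp_log (Qg_pos _)
    · -- N ≥ 2
      have ha : (0:ℝ) < C * ε := by positivity
      have hkey : 2*C*ε*(1+2*C*ε) ≤ c := by
        have h1 : c1 ε = 2*C*ε*(1+2*C*ε) := rfl
        rw [hcdef, h1]
        linarith
      have hcge : 3 * ((m.factorial : ℝ) * ε)^2 * (1+c) ≤ 2 * c^2 := by
        rw [← hCdef]
        nlinarith [mul_le_mul_of_nonneg_left hkey (le_of_lt hc),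
          mul_le_mul_of_nonneg_left hkey (le_of_lt ha),
          sq_nonneg (C*ε), mul_pos ha ha, mul_pos (mul_pos ha ha) ha]
      exact main_ge_two m hm ξ hmeas hgauss hindep S hS1 hSrec f ε hε c hc hcge N hN
end
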